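/- arXiv:2511.02138 — 5 statements merged into one kernel-verified Lean document; each statement's English description precedes it below -/
import Mathlib

section
/- Let G be as described. Then, inside the closed subspace {f ∈ ℓ²(E) : ∂f = 0} of ℓ²(E), the orthogonal complement of ℓ²_{0,c}(E) is exactly the set {du : u : V → ℝ, ∂(du) = 0, du ∈ ℓ²(E)}, where du is the 1-cochain du(e) = u(end(e)) − u(beg(e)). Equivalently, every f ∈ ℓ²(E) with ∂f = 0 decomposes (orthogonally and uniquely) as f = f₀ + du with f₀ ∈ ℓ²_{0,c}(E), du ∈ ℓ²(E), ∂(du) = 0, and ⟨f₀, du⟩_{ℓ²(E)} = 0. -/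
/-- A graph on `V` given by a set of oriented edges: a set `E` of ordered pairs
containing no loops and at most one orientation of each edge.  This encodes a simple
graph together with a chosen orientation of each of its edges. -/
structure OriGraph (V : Type*) where
  /-- the set of oriented edges -/
  E : Set (V × V)
  ne : ∀ p ∈ E, p.1 ≠ p.2
  antisymm : ∀ p ∈ E, p.swap ∉ E

namespace OriGraph

variable {V : Type*} (O : OriGraph V)

/-- The underlying simple graph: `u` and `v` are adjacent iff one of the two oriented
pairs is an edge. -/
def G : SimpleGraph V where
  Adj u v := (u, v) ∈ O.E ∨ (v, u) ∈ O.E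
  symm := ⟨fun u v h => h.symm⟩
  loopless := by
    constructor
    intro u h
    rcases h with h | h
    · exact O.ne _ h rfl
    · exact O.ne _ h rfl

/-- All vertex degrees of the underlying graph are bounded by some finite constant. -/
def BddDegree : Prop :=
  ∃ N : ℕ, ∀ v : V, (O.G.neighborSet v).Finite ∧ (O.G.neighborSet v).ncard ≤ N

/-- The boundary of a 1-cochain:
`∂f(v) = Σ_{e : end(e) = v} f(e) − Σ_{e : beg(e) = v} f(e)`. -/
noncomputable def bdry (f : ↥O.E → ℝ) (v : V) : ℝ :=
  (∑' e : {e : ↥O.E // (e : V × V).2 = v}, f e.1) -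
    (∑' e : {e : ↥O.E // (e : V × V).1 = v}, f e.1)

/-- `f` is a finitely supported closed 1-cochain. -/
noncomputable def FinClosed (f : ↥O.E → ℝ) : Prop :=
  (Function.support f).Finite ∧ ∀ v, O.bdry f v = 0

/-- Membership in `ℓ²_{0,c}(E)`: `g` is an ℓ²-limit of finitely supported closed
1-cochains. -/
noncomputable def MemL2oc (g : ↥O.E → ℝ) : Prop :=
  ∃ F : ℕ → ↥O.E → ℝ, (∀ k, O.FinClosed (F k)) ∧
    (∀ k, Summable fun e => (g e - F k e) ^ 2) ∧
    Filter.Tendsto (fun k => ∑' e, (g e - F k e) ^ 2) Filter.atTop (nhds 0)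

/-- The signed value of the 1-cochain `f` on the oriented step from `u` to `v`:
`f(e)` if `e = (u,v)` is an oriented edge, `−f(e)` if `e = (v,u)` is one, `0` otherwise. -/
noncomputable def stepVal (f : ↥O.E → ℝ) (u v : V) : ℝ :=
  (∑' e : {e : ↥O.E // (e : V × V) = (u, v)}, f e.1) -
    (∑' e : {e : ↥O.E // (e : V × V) = (v, u)}, f e.1)

/-- The signed sum of a 1-cochain `f` along a walk of the underlying graph. -/
noncomputable def walkSum (f : ↥O.E → ℝ) {u v : V} (w : O.G.Walk u v) : ℝ :=
  (w.darts.map (fun d => O.stepVal f d.toProd.1 d.toProd.2)).sum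

/-- A set of (unoriented) edges is a face of parameter `D` if it is the edge set of some
cycle of the underlying graph of length at most `D`.  A cycle is determined, up to
rotation and reversal, by its edge set. -/
def IsFaceSet (D : ℕ) (c : Set (Sym2 V)) : Prop :=
  ∃ (v : V) (w : O.G.Walk v v), w.IsCycle ∧ w.length ≤ D ∧ {e | e ∈ w.edges} = c

/-- The type of faces of parameter `D`. -/
def Face (D : ℕ) : Type _ := {c : Set (Sym2 V) // O.IsFaceSet D c}

/-- `(df)(c)`: the signed sum of a 1-cochain `f` along a traversal of the face `c`
(a chosen orientation of the face). -/
noncomputable def faceVal (D : ℕ) (f : ↥O.E → ℝ) (c : O.Face D) : ℝ :=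
  O.walkSum f c.2.choose_spec.choose

/-- `G` has a coexact 1-Laplacian spectral gap for `D`: there is `ε > 0` with
`ε·Σ_e f(e)² ≤ Σ_{c face} ((df)(c))²` for every finitely supported closed 1-cochain. -/
noncomputable def HasGap (D : ℕ) : Prop :=
  ∃ ε : ℝ, 0 < ε ∧ ∀ f : ↥O.E → ℝ, (Function.support f).Finite →
    (∀ v, O.bdry f v = 0) →
    ε * ∑' e : ↥O.E, f e ^ 2 ≤ ∑' c : O.Face D, O.faceVal D f c ^ 2

end OriGraph

namespace OriGraph

open scoped BigOperators
open scoped ENNReal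
open scoped Classical

variable {V : Type*} (O : OriGraph V)

/-! ### Elementary tsum lemmas -/

lemma summable_fiber {P : ↥O.E → Prop} {f : ↥O.E → ℝ}
    (hf : (Function.support f).Finite) : Summable (fun e : {e : ↥O.E // P e} => f e.1) := by
  apply summable_of_finite_support
  have : Function.support (fun e : {e : ↥O.E // P e} => f e.1)
      ⊆ Subtype.val ⁻¹' Function.support f := fun e he => he
  exact Set.Finite.subset (hf.preimage Subtype.val_injective.injOn) this

lemma bdry_zero (v : V) : O.bdry (0 : ↥O.E → ℝ) v = 0 := by
  unfold bdry
  simp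

lemma bdry_add_of_finsupp {f g : ↥O.E → ℝ} (hf : (Function.support f).Finite)
    (hg : (Function.support g).Finite) (v : V) :
    O.bdry (f + g) v = O.bdry f v + O.bdry g v := by
  unfold bdry
  have h1 := Summable.tsum_add (O.summable_fiber (P := fun e => (e : V × V).2 = v) hf)
    (O.summable_fiber (P := fun e => (e : V × V).2 = v) hg)
  have h2 := Summable.tsum_add (O.summable_fiber (P := fun e => (e : V × V).1 = v) hf)
    (O.summable_fiber (P := fun e => (e : V × V).1 = v) hg)
  simp only [Pi.add_apply] at *
  rw [h1, h2]
  ring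

lemma bdry_smul (c : ℝ) (f : ↥O.E → ℝ) (v : V) :
    O.bdry (c • f) v = c * O.bdry f v := by
  unfold bdry
  simp only [Pi.smul_apply, smul_eq_mul, tsum_mul_left]
  ring

/-- `bdry` of a single-edge cochain. -/
lemma bdry_single (e₀ : ↥O.E) (c : ℝ) (w : V) :
    O.bdry (fun e => if e = e₀ then c else 0) w
      = (if (e₀ : V × V).2 = w then c else 0) - (if (e₀ : V × V).1 = w then c else 0) := by
  unfold bdry
  congr 1
  · by_cases h : (e₀ : V × V).2 = w
    · rw [if_pos h]
      refine tsum_eq_single (⟨e₀, h⟩ : {e : ↥O.E // (e : V × V).2 = w}) ?_ |>.trans (if_pos rfl)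
      intro e' hne
      exact if_neg fun he => hne (Subtype.ext he)
    · rw [if_neg h]
      have : ∀ e' : {e : ↥O.E // (e : V × V).2 = w}, (if e'.1 = e₀ then c else 0) = 0 :=
        fun e' => if_neg fun he => h (by rw [← he]; exact e'.2)
      calc (∑' e' : {e : ↥O.E // (e : V × V).2 = w}, if e'.1 = e₀ then c else 0)
          = ∑' _ : {e : ↥O.E // (e : V × V).2 = w}, (0 : ℝ) := tsum_congr this
        _ = 0 := tsum_zero
  · by_cases h : (e₀ : V × V).1 = w
    · rw [if_pos h]
      refine tsum_eq_single (⟨e₀, h⟩ : {e : ↥O.E // (e : V × V).1 = w}) ?_ |>.trans (if_pos rfl)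
      intro e' hne
      exact if_neg fun he => hne (Subtype.ext he)
    · rw [if_neg h]
      have : ∀ e' : {e : ↥O.E // (e : V × V).1 = w}, (if e'.1 = e₀ then c else 0) = 0 :=
        fun e' => if_neg fun he => h (by rw [← he]; exact e'.2)
      calc (∑' e' : {e : ↥O.E // (e : V × V).1 = w}, if e'.1 = e₀ then c else 0)
          = ∑' _ : {e : ↥O.E // (e : V × V).1 = w}, (0 : ℝ) := tsum_congr this
        _ = 0 := tsum_zero

/-! ### The step cochain -/

/-- The elementary 1-cochain supported on the (oriented) edge between `u` and `v`. -/
noncomputable def stepF (u v : V) : ↥O.E → ℝ := fun e =>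
  if (e : V × V) = (u, v) then 1 else if (e : V × V) = (v, u) then -1 else 0

lemma stepF_eq_of_mem {u v : V} (h : (u, v) ∈ O.E) :
    O.stepF u v = fun e => if e = (⟨(u, v), h⟩ : ↥O.E) then (1 : ℝ) else 0 := by
  funext e
  unfold stepF
  by_cases h1 : (e : V × V) = (u, v)
  · rw [if_pos h1, if_pos (Subtype.ext h1)]
  · rw [if_neg h1, if_neg fun he => h1 (congrArg Subtype.val he)]
    by_cases h2 : (e : V × V) = (v, u)
    · exact absurd (show ((u,v) : V × V).swap ∈ O.E by rw [Prod.swap_prod_mk, ← h2]; exact e.2) (O.antisymm _ h)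
    · rw [if_neg h2]

lemma stepF_eq_of_mem' {u v : V} (h : (v, u) ∈ O.E) :
    O.stepF u v = fun e => if e = (⟨(v, u), h⟩ : ↥O.E) then (-1 : ℝ) else 0 := by
  funext e
  unfold stepF
  by_cases h1 : (e : V × V) = (u, v)
  · exact absurd (show ((v,u) : V × V).swap ∈ O.E by rw [Prod.swap_prod_mk, ← h1]; exact e.2) (O.antisymm _ h)
  · rw [if_neg h1]
    by_cases h2 : (e : V × V) = (v, u)
    · rw [if_pos h2, if_pos (Subtype.ext h2)]
    · rw [if_neg h2, if_neg fun he => h2 (congrArg Subtype.val he)]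

lemma stepF_eq_zero {u v : V} (h1 : (u, v) ∉ O.E) (h2 : (v, u) ∉ O.E) :
    O.stepF u v = 0 := by
  funext e
  unfold stepF
  rw [if_neg fun he => h1 (by rw [← he]; exact e.2), if_neg fun he => h2 (by rw [← he]; exact e.2)]
  rfl

lemma stepF_support_finite (u v : V) : (Function.support (O.stepF u v)).Finite := by
  have : Function.support (O.stepF u v)
      ⊆ Subtype.val ⁻¹' ({(u, v), (v, u)} : Set (V × V)) := by
    intro e he
    unfold stepF at he
    by_cases h1 : (e : V × V) = (u, v)
    · exact Or.inl h1
    · by_cases h2 : (e : V × V) = (v, u)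
      · exact Or.inr h2
      · simp only [Function.mem_support, if_neg h1, if_neg h2] at he
        exact absurd rfl he
  exact Set.Finite.subset (Set.Finite.preimage Subtype.val_injective.injOn
    (Set.toFinite _)) this

lemma stepVal_of_mem {u v : V} (h : (u, v) ∈ O.E) (g : ↥O.E → ℝ) :
    O.stepVal g u v = g ⟨(u, v), h⟩ := by
  unfold stepVal
  have h1 : (∑' e : {e : ↥O.E // (e : V × V) = (u, v)}, g e.1) = g ⟨(u, v), h⟩ := by
    refine tsum_eq_single (⟨⟨(u, v), h⟩, rfl⟩ : {e : ↥O.E // (e : V × V) = (u, v)}) ?_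
    intro e' hne
    exact absurd (Subtype.ext (Subtype.ext e'.2)) hne
  have : IsEmpty {e : ↥O.E // (e : V × V) = (v, u)} :=
    ⟨fun e => O.antisymm _ h (show ((u,v) : V × V).swap ∈ O.E by rw [Prod.swap_prod_mk, ← e.2]; exact e.1.2)⟩
  rw [h1, tsum_empty, sub_zero]

lemma stepVal_of_mem' {u v : V} (h : (v, u) ∈ O.E) (g : ↥O.E → ℝ) :
    O.stepVal g u v = -g ⟨(v, u), h⟩ := by
  unfold stepVal
  have h1 : (∑' e : {e : ↥O.E // (e : V × V) = (v, u)}, g e.1) = g ⟨(v, u), h⟩ := by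
    refine tsum_eq_single (⟨⟨(v, u), h⟩, rfl⟩ : {e : ↥O.E // (e : V × V) = (v, u)}) ?_
    intro e' hne
    exact absurd (Subtype.ext (Subtype.ext e'.2)) hne
  have : IsEmpty {e : ↥O.E // (e : V × V) = (u, v)} :=
    ⟨fun e => O.antisymm _ h (show ((v,u) : V × V).swap ∈ O.E by rw [Prod.swap_prod_mk, ← e.2]; exact e.1.2)⟩
  rw [h1, tsum_empty, zero_sub]

lemma stepVal_symm (g : ↥O.E → ℝ) (u v : V) :
    O.stepVal g v u = -O.stepVal g u v := by
  unfold stepVal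
  rw [neg_sub]

lemma tsum_stepF_mul (g : ↥O.E → ℝ) (u v : V) :
    ∑' e, O.stepF u v e * g e = O.stepVal g u v := by
  by_cases h : (u, v) ∈ O.E
  · rw [O.stepVal_of_mem h, O.stepF_eq_of_mem h]
    refine (tsum_eq_single (⟨(u, v), h⟩ : ↥O.E) ?_).trans (by simp)
    intro e' hne
    simp [if_neg hne]
  · by_cases h' : (v, u) ∈ O.E
    · rw [O.stepVal_of_mem' h' g, O.stepF_eq_of_mem' h']
      refine (tsum_eq_single (⟨(v, u), h'⟩ : ↥O.E) ?_).trans (by simp)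
      intro e' hne
      simp [if_neg hne]
    · rw [O.stepF_eq_zero h h']
      have h1 : IsEmpty {e : ↥O.E // (e : V × V) = (u, v)} := ⟨fun e => h (by rw [← e.2]; exact e.1.2)⟩
      have h2 : IsEmpty {e : ↥O.E // (e : V × V) = (v, u)} := ⟨fun e => h' (by rw [← e.2]; exact e.1.2)⟩
      unfold stepVal
      simp

lemma stepF_bdry {u v : V} (h : O.G.Adj u v) (w : V) :
    O.bdry (O.stepF u v) w = (if v = w then 1 else 0) - (if u = w then 1 else 0) := by
  rcases h with h | h
  · rw [O.stepF_eq_of_mem h, O.bdry_single]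
  · rw [O.stepF_eq_of_mem' h, O.bdry_single]
    by_cases h1 : v = w <;> by_cases h2 : u = w <;> simp [h1, h2]

/-! ### Walk cochains -/

/-- The 1-cochain obtained by summing the elementary cochains along the darts of a walk. -/
noncomputable def walkF {a b : V} (w : O.G.Walk a b) : ↥O.E → ℝ :=
  (w.darts.map (fun d => O.stepF d.toProd.1 d.toProd.2)).sum

@[simp] lemma walkF_nil {a : V} : O.walkF (SimpleGraph.Walk.nil : O.G.Walk a a) = 0 := rfl

lemma walkF_cons {a b c : V} (h : O.G.Adj a b) (p : O.G.Walk b c) :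
    O.walkF (SimpleGraph.Walk.cons h p) = O.stepF a b + O.walkF p := by
  unfold walkF
  rw [SimpleGraph.Walk.darts_cons, List.map_cons, List.sum_cons]

@[simp] lemma walkSum_nil (g : ↥O.E → ℝ) {a : V} :
    O.walkSum g (SimpleGraph.Walk.nil : O.G.Walk a a) = 0 := rfl

lemma walkSum_cons (g : ↥O.E → ℝ) {a b c : V} (h : O.G.Adj a b) (p : O.G.Walk b c) :
    O.walkSum g (SimpleGraph.Walk.cons h p) = O.stepVal g a b + O.walkSum g p := by
  unfold walkSum
  rw [SimpleGraph.Walk.darts_cons, List.map_cons, List.sum_cons]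

lemma walkSum_append (g : ↥O.E → ℝ) {a b c : V} (p : O.G.Walk a b) (q : O.G.Walk b c) :
    O.walkSum g (p.append q) = O.walkSum g p + O.walkSum g q := by
  unfold walkSum
  rw [SimpleGraph.Walk.darts_append, List.map_append, List.sum_append]

lemma list_sum_neg {α : Type*} (l : List α) (h : α → ℝ) :
    (l.map (fun x => -h x)).sum = -(l.map h).sum := by
  induction l with
  | nil => simp
  | cons a t ih => simp [ih]; ring

lemma walkSum_reverse (g : ↥O.E → ℝ) {a b : V} (p : O.G.Walk a b) :
    O.walkSum g p.reverse = -O.walkSum g p := by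
  unfold walkSum
  rw [SimpleGraph.Walk.darts_reverse, List.map_reverse, List.sum_reverse, List.map_map]
  have : ((fun d : O.G.Dart => O.stepVal g d.toProd.1 d.toProd.2) ∘ SimpleGraph.Dart.symm)
      = fun d : O.G.Dart => -(O.stepVal g d.toProd.1 d.toProd.2) := by
    funext d
    exact O.stepVal_symm g d.toProd.1 d.toProd.2
  rw [this, list_sum_neg]

lemma walkF_support_finite {a b : V} (w : O.G.Walk a b) :
    (Function.support (O.walkF w)).Finite := by
  induction w with
  | nil => simp
  | @cons u c b h p ih =>
    rw [O.walkF_cons]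
    exact (((O.stepF_support_finite u c).union ih).subset (Function.support_add _ _))

lemma walkF_bdry {a b : V} (w : O.G.Walk a b) (v : V) :
    O.bdry (O.walkF w) v = (if b = v then 1 else 0) - (if a = v then 1 else 0) := by
  induction w with
  | nil => rw [walkF_nil, O.bdry_zero]; ring
  | @cons u c b h p ih =>
    rw [O.walkF_cons, O.bdry_add_of_finsupp (O.stepF_support_finite u c)
      (O.walkF_support_finite p), O.stepF_bdry h, ih]
    ring

lemma tsum_walkF_mul (g : ↥O.E → ℝ) {a b : V} (w : O.G.Walk a b) :
    ∑' e, O.walkF w e * g e = O.walkSum g w := by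
  induction w with
  | nil => simp
  | @cons u c b h p ih =>
    rw [O.walkF_cons, O.walkSum_cons, ← ih, ← O.tsum_stepF_mul g u c]
    rw [← Summable.tsum_add]
    · apply tsum_congr
      intro e
      simp [Pi.add_apply]
      ring
    · apply summable_of_finite_support
      refine (O.stepF_support_finite u c).subset fun e he => ?_
      exact left_ne_zero_of_mul he
    · apply summable_of_finite_support
      refine (O.walkF_support_finite p).subset fun e he => ?_
      exact left_ne_zero_of_mul he

/-! ### Pairing of a finitely supported closed cochain with a gradient -/

lemma bdry_eq_sum_of_finsupp {f : ↥O.E → ℝ} (hf : (Function.support f).Finite)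
    (S : Finset ↥O.E) (hS : Function.support f ⊆ S) (v : V) :
    O.bdry f v = (∑ e ∈ S, if (e : V × V).2 = v then f e else 0)
      - (∑ e ∈ S, if (e : V × V).1 = v then f e else 0) := by
  have hA : (∑' e : {e : ↥O.E // (e : V × V).2 = v}, f e.1)
      = ∑ e ∈ S, if (e : V × V).2 = v then f e else 0 := by
    refine Eq.trans (tsum_subtype {e : ↥O.E | (e : V × V).2 = v} f) ?_
    rw [tsum_eq_sum (s := S) (fun e he => ?_)]
    · apply Finset.sum_congr rfl
      intro e _
      simp [Set.indicator_apply]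
    · rw [Set.indicator_apply]
      split
      · by_cases hfe : f e = 0
        · exact hfe
        · exact absurd (hS hfe) he
      · rfl
  have hB : (∑' e : {e : ↥O.E // (e : V × V).1 = v}, f e.1)
      = ∑ e ∈ S, if (e : V × V).1 = v then f e else 0 := by
    refine Eq.trans (tsum_subtype {e : ↥O.E | (e : V × V).1 = v} f) ?_
    rw [tsum_eq_sum (s := S) (fun e he => ?_)]
    · apply Finset.sum_congr rfl
      intro e _
      simp [Set.indicator_apply]
    · rw [Set.indicator_apply]
      split
      · by_cases hfe : f e = 0
        · exact hfe
        · exact absurd (hS hfe) he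
      · rfl
  unfold bdry
  rw [hA, hB]

lemma tsum_finClosed_mul_grad (u : V → ℝ) {f : ↥O.E → ℝ} (hf : O.FinClosed f) :
    ∑' e : ↥O.E, f e * (u (e : V × V).2 - u (e : V × V).1) = 0 := by
  classical
  obtain ⟨hsupp, hclosed⟩ := hf
  set S : Finset ↥O.E := hsupp.toFinset with hSdef
  have hSsub : Function.support f ⊆ S := by
    intro e he
    simpa [hSdef] using he
  rw [tsum_eq_sum (s := S) (fun e he => by
    have : f e = 0 := by
      by_contra hne
      exact he (hSsub hne)
    rw [this, zero_mul])]
  set T : Finset V := S.image (fun e : ↥O.E => (e : V × V).2) ∪ S.image (fun e : ↥O.E => (e : V × V).1)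
    with hTdef
  have h2 : ∑ e ∈ S, f e * u (e : V × V).2
      = ∑ v ∈ T, (∑ e ∈ S, if (e : V × V).2 = v then f e else 0) * u v := by
    have : ∀ v, (∑ e ∈ S, if (e : V × V).2 = v then f e else 0) * u v
        = ∑ e ∈ S, if (e : V × V).2 = v then f e * u v else 0 := by
      intro v
      rw [Finset.sum_mul]
      apply Finset.sum_congr rfl
      intro e _
      split <;> simp
    simp_rw [this]
    rw [Finset.sum_comm]
    apply Finset.sum_congr rfl
    intro e heS
    have hmem : (e : V × V).2 ∈ T := by
      rw [hTdef]
      refine Finset.mem_union_left _ ?_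
      exact Finset.mem_image_of_mem (fun e : ↥O.E => (e : V × V).2) heS
    have : ∀ v ∈ T, (if (e : V × V).2 = v then f e * u v else 0)
        = if (e : V × V).2 = v then f e * u (e : V × V).2 else 0 := by
      intro v _
      split
      · next hv => rw [hv]
      · rfl
    rw [Finset.sum_congr rfl this, Finset.sum_ite_eq T ((e : V × V).2)
      (fun _ => f e * u (e : V × V).2), if_pos hmem]
  have h1 : ∑ e ∈ S, f e * u (e : V × V).1
      = ∑ v ∈ T, (∑ e ∈ S, if (e : V × V).1 = v then f e else 0) * u v := by
    have : ∀ v, (∑ e ∈ S, if (e : V × V).1 = v then f e else 0) * u v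
        = ∑ e ∈ S, if (e : V × V).1 = v then f e * u v else 0 := by
      intro v
      rw [Finset.sum_mul]
      apply Finset.sum_congr rfl
      intro e _
      split <;> simp
    simp_rw [this]
    rw [Finset.sum_comm]
    apply Finset.sum_congr rfl
    intro e heS
    have hmem : (e : V × V).1 ∈ T := by
      rw [hTdef]
      refine Finset.mem_union_right _ ?_
      exact Finset.mem_image_of_mem (fun e : ↥O.E => (e : V × V).1) heS
    have : ∀ v ∈ T, (if (e : V × V).1 = v then f e * u v else 0)
        = if (e : V × V).1 = v then f e * u (e : V × V).1 else 0 := by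
      intro v _
      split
      · next hv => rw [hv]
      · rfl
    rw [Finset.sum_congr rfl this, Finset.sum_ite_eq T ((e : V × V).1)
      (fun _ => f e * u (e : V × V).1), if_pos hmem]
  have expand : ∑ e ∈ S, f e * (u (e : V × V).2 - u (e : V × V).1)
      = ∑ e ∈ S, f e * u (e : V × V).2 - ∑ e ∈ S, f e * u (e : V × V).1 := by
    rw [← Finset.sum_sub_distrib]
    apply Finset.sum_congr rfl
    intros
    ring
  rw [expand, h2, h1, ← Finset.sum_sub_distrib]
  have : ∀ v ∈ T, (∑ e ∈ S, if (e : V × V).2 = v then f e else 0) * u v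
      - (∑ e ∈ S, if (e : V × V).1 = v then f e else 0) * u v = 0 := by
    intro v _
    have hb := O.bdry_eq_sum_of_finsupp hsupp S hSsub v
    rw [hclosed v] at hb
    have : (∑ e ∈ S, if (e : V × V).2 = v then f e else 0)
        = (∑ e ∈ S, if (e : V × V).1 = v then f e else 0) := by linarith
    rw [this]
    ring
  rw [Finset.sum_congr rfl this, Finset.sum_const, smul_zero]

/-! ### Existence of a potential -/

lemma finClosed_memL2oc {f : ↥O.E → ℝ} (hf : O.FinClosed f) : O.MemL2oc f := by
  refine ⟨fun _ => f, fun _ => hf, fun _ => by simpa using summable_zero, ?_⟩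
  simpa using tendsto_const_nhds

lemma exists_grad (hconn : O.G.Connected) {g : ↥O.E → ℝ}
    (hg : ∀ f : ↥O.E → ℝ, O.FinClosed f → ∑' e, f e * g e = 0) :
    ∃ u : V → ℝ, ∀ e : ↥O.E, g e = u (e : V × V).2 - u (e : V × V).1 := by
  rcases isEmpty_or_nonempty V with h | h
  · exact ⟨fun _ => 0, fun e => (h.false (e : V × V).1).elim⟩
  obtain ⟨v₀⟩ := h
  have hw : ∀ v, O.G.Walk v₀ v := fun v => (hconn.preconnected v₀ v).some
  refine ⟨fun v => O.walkSum g (hw v), fun e => ?_⟩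
  obtain ⟨⟨a, b⟩, he⟩ := e
  have hadj : O.G.Adj a b := Or.inl he
  set w : O.G.Walk v₀ v₀ :=
    ((hw a).append (SimpleGraph.Walk.cons hadj SimpleGraph.Walk.nil)).append (hw b).reverse
    with hwdef
  have hfc : O.FinClosed (O.walkF w) := by
    refine ⟨O.walkF_support_finite w, fun v => by rw [O.walkF_bdry]; ring⟩
  have h0 : O.walkSum g w = 0 := by
    rw [← O.tsum_walkF_mul g w]
    exact hg _ hfc
  rw [hwdef, O.walkSum_append, O.walkSum_append, O.walkSum_cons, O.walkSum_reverse,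
    O.walkSum_nil] at h0
  have hstep : O.stepVal g a b = g ⟨(a, b), he⟩ := O.stepVal_of_mem he g
  show g ⟨(a, b), he⟩ = O.walkSum g (hw b) - O.walkSum g (hw a)
  rw [← hstep]
  linarith

/-! ### Bounded-degree facts -/

lemma finite_endFiber (hdeg : O.BddDegree) (v : V) :
    Finite {e : ↥O.E // (e : V × V).2 = v} := by
  obtain ⟨N, hN⟩ := hdeg
  have hfin : Finite (O.G.neighborSet v) := (hN v).1.to_subtype
  refine Finite.of_injective (fun e => (⟨(e.1 : V × V).1, ?_⟩ : O.G.neighborSet v)) ?_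
  · have h := e.1.2
    have h2 : ((e.1 : V × V).1, v) ∈ O.E := by
      have h3 : (e.1 : V × V) = ((e.1 : V × V).1, v) := Prod.ext_iff.mpr ⟨rfl, e.2⟩
      rw [← h3]
      exact h
    exact Or.inr h2
  · intro e₁ e₂ hh
    simp only [Subtype.mk.injEq] at hh
    apply Subtype.ext
    apply Subtype.ext
    have h1 : (e₁.1 : V × V) = ((e₁.1 : V × V).1, v) := Prod.ext_iff.mpr ⟨rfl, e₁.2⟩
    have h2 : (e₂.1 : V × V) = ((e₂.1 : V × V).1, v) := Prod.ext_iff.mpr ⟨rfl, e₂.2⟩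
    rw [h1, h2, show (e₁.1 : V × V).1 = (e₂.1 : V × V).1 from congrArg Subtype.val hh]

lemma finite_begFiber (hdeg : O.BddDegree) (v : V) :
    Finite {e : ↥O.E // (e : V × V).1 = v} := by
  obtain ⟨N, hN⟩ := hdeg
  have hfin : Finite (O.G.neighborSet v) := (hN v).1.to_subtype
  refine Finite.of_injective (fun e => (⟨(e.1 : V × V).2, ?_⟩ : O.G.neighborSet v)) ?_
  · have h := e.1.2
    have h2 : (v, (e.1 : V × V).2) ∈ O.E := by
      have h3 : (e.1 : V × V) = (v, (e.1 : V × V).2) := Prod.ext_iff.mpr ⟨e.2, rfl⟩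
      rw [← h3]
      exact h
    exact Or.inl h2
  · intro e₁ e₂ hh
    simp only [Subtype.mk.injEq] at hh
    apply Subtype.ext
    apply Subtype.ext
    have h1 : (e₁.1 : V × V) = (v, (e₁.1 : V × V).2) := Prod.ext_iff.mpr ⟨e₁.2, rfl⟩
    have h2 : (e₂.1 : V × V) = (v, (e₂.1 : V × V).2) := Prod.ext_iff.mpr ⟨e₂.2, rfl⟩
    rw [h1, h2, show (e₁.1 : V × V).2 = (e₂.1 : V × V).2 from congrArg Subtype.val hh]

lemma bdry_sub_of_bddDegree (hdeg : O.BddDegree) (f g : ↥O.E → ℝ) (v : V) :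
    O.bdry (f - g) v = O.bdry f v - O.bdry g v := by
  haveI := O.finite_endFiber hdeg v
  haveI := O.finite_begFiber hdeg v
  unfold bdry
  have h1 := Summable.tsum_sub (Summable.of_finite (L := SummationFilter.unconditional _) (f := fun e : {e : ↥O.E // (e : V × V).2 = v} => f e.1))
    (Summable.of_finite (L := SummationFilter.unconditional _) (f := fun e : {e : ↥O.E // (e : V × V).2 = v} => g e.1))
  have h2 := Summable.tsum_sub (Summable.of_finite (L := SummationFilter.unconditional _) (f := fun e : {e : ↥O.E // (e : V × V).1 = v} => f e.1))
    (Summable.of_finite (L := SummationFilter.unconditional _) (f := fun e : {e : ↥O.E // (e : V × V).1 = v} => g e.1))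
  simp only [Pi.sub_apply] at *
  rw [h1, h2]
  ring

lemma bdry_bound (hdeg : O.BddDegree) (v : V) :
    ∃ C : ℝ, 0 ≤ C ∧ ∀ x : lp (fun _ : ↥O.E => ℝ) 2, |O.bdry (⇑x) v| ≤ C * ‖x‖ := by
  haveI := O.finite_endFiber hdeg v
  haveI := O.finite_begFiber hdeg v
  haveI := Fintype.ofFinite {e : ↥O.E // (e : V × V).2 = v}
  haveI := Fintype.ofFinite {e : ↥O.E // (e : V × V).1 = v}
  refine ⟨(Fintype.card {e : ↥O.E // (e : V × V).2 = v}
    + Fintype.card {e : ↥O.E // (e : V × V).1 = v} : ℕ), Nat.cast_nonneg _, fun x => ?_⟩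
  have hb : ∀ e : ↥O.E, |x e| ≤ ‖x‖ := fun e => by
    have := lp.norm_apply_le_norm (by norm_num : (2 : ℝ≥0∞) ≠ 0) x e
    simpa [Real.norm_eq_abs] using this
  unfold bdry
  rw [tsum_fintype, tsum_fintype]
  calc |∑ e : {e : ↥O.E // (e : V × V).2 = v}, x e.1
        - ∑ e : {e : ↥O.E // (e : V × V).1 = v}, x e.1|
      ≤ |∑ e : {e : ↥O.E // (e : V × V).2 = v}, x e.1|
        + |∑ e : {e : ↥O.E // (e : V × V).1 = v}, x e.1| := abs_sub _ _
    _ ≤ (∑ e : {e : ↥O.E // (e : V × V).2 = v}, |x e.1|)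
        + ∑ e : {e : ↥O.E // (e : V × V).1 = v}, |x e.1| := by
        gcongr <;> exact Finset.abs_sum_le_sum_abs _ _
    _ ≤ (∑ _e : {e : ↥O.E // (e : V × V).2 = v}, ‖x‖)
        + ∑ _e : {e : ↥O.E // (e : V × V).1 = v}, ‖x‖ := by
        gcongr <;> exact hb _
    _ = (Fintype.card {e : ↥O.E // (e : V × V).2 = v}
        + Fintype.card {e : ↥O.E // (e : V × V).1 = v} : ℕ) * ‖x‖ := by
        rw [Finset.sum_const, Finset.sum_const, Finset.card_univ, Finset.card_univ,
          nsmul_eq_mul, nsmul_eq_mul]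
        push_cast
        ring

/-! ### The Hilbert space `ℓ²(E)` -/

lemma normsq_fun (f : ↥O.E → ℝ) :
    (fun e => ‖f e‖ ^ (2 : ℝ≥0∞).toReal) = fun e => f e ^ 2 := by
  funext e
  rw [ENNReal.toReal_ofNat, Real.norm_eq_abs, show ((2 : ℝ)) = ((2 : ℕ) : ℝ) by norm_num,
    Real.rpow_natCast]
  exact sq_abs (f e)

lemma memℓp_of_summable_sq {f : ↥O.E → ℝ} (hf : Summable fun e => f e ^ 2) :
    Memℓp f 2 := by
  apply memℓp_gen
  rw [O.normsq_fun]
  exact hf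

lemma summable_sq_of_memℓp {f : ↥O.E → ℝ} (hf : Memℓp f 2) :
    Summable fun e => f e ^ 2 := by
  have h := hf.summable (p := 2) (by rw [ENNReal.toReal_ofNat]; norm_num)
  rwa [O.normsq_fun] at h

lemma memℓp_of_finsupp {f : ↥O.E → ℝ} (hf : (Function.support f).Finite) :
    Memℓp f 2 := by
  apply O.memℓp_of_summable_sq
  apply summable_of_finite_support
  refine hf.subset fun e he => ?_
  intro h0
  exact he (by rw [Function.mem_support] at *; rw [h0] at he; simp at he)

lemma norm_sq_eq (x : lp (fun _ : ↥O.E => ℝ) 2) : ‖x‖ ^ 2 = ∑' e, (x e) ^ 2 := by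
  have h := lp.norm_rpow_eq_tsum (p := 2) (E := fun _ : ↥O.E => ℝ)
    (by rw [ENNReal.toReal_ofNat]; norm_num) x
  simp only [ENNReal.toReal_ofNat, Real.norm_eq_abs,
    show ((2 : ℝ)) = ((2 : ℕ) : ℝ) from by norm_num, Real.rpow_natCast, sq_abs] at h
  exact h

lemma inner_eq (x y : lp (fun _ : ↥O.E => ℝ) 2) :
    (inner ℝ x y : ℝ) = ∑' e, x e * y e := by
  rw [lp.inner_eq_tsum]
  apply tsum_congr
  intro e
  simp [RCLike.inner_apply, starRingEnd_apply, star_trivial, mul_comm]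

lemma tendsto_of_tsum_sq (x : lp (fun _ : ↥O.E => ℝ) 2)
    (y : ℕ → lp (fun _ : ↥O.E => ℝ) 2)
    (h : Filter.Tendsto (fun k => ∑' e, (x e - y k e) ^ 2) Filter.atTop (nhds 0)) :
    Filter.Tendsto y Filter.atTop (nhds x) := by
  have key : ∀ k, ‖x - y k‖ ^ 2 = ∑' e, (x e - y k e) ^ 2 := by
    intro k
    rw [O.norm_sq_eq]
    apply tsum_congr
    intro e
    rw [congrFun (lp.coeFn_sub x (y k)) e]
    rfl
  have h1 : Filter.Tendsto (fun k => Real.sqrt (∑' e, (x e - y k e) ^ 2))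
      Filter.atTop (nhds (Real.sqrt 0)) := (Real.continuous_sqrt.tendsto 0).comp h
  rw [Real.sqrt_zero] at h1
  have h2 : (fun k => ‖x - y k‖) = fun k => Real.sqrt (∑' e, (x e - y k e) ^ 2) := by
    funext k
    rw [← key k, Real.sqrt_sq (norm_nonneg _)]
  rw [tendsto_iff_norm_sub_tendsto_zero]
  have h3 : (fun k => ‖y k - x‖) = fun k => ‖x - y k‖ := by
    funext k
    rw [norm_sub_rev]
  rw [h3, h2]
  exact h1

lemma tendsto_tsum_sq (x : lp (fun _ : ↥O.E => ℝ) 2)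
    (y : ℕ → lp (fun _ : ↥O.E => ℝ) 2)
    (h : Filter.Tendsto y Filter.atTop (nhds x)) :
    Filter.Tendsto (fun k => ∑' e, (x e - y k e) ^ 2) Filter.atTop (nhds 0) := by
  have key : ∀ k, ‖x - y k‖ ^ 2 = ∑' e, (x e - y k e) ^ 2 := by
    intro k
    rw [O.norm_sq_eq]
    apply tsum_congr
    intro e
    rw [congrFun (lp.coeFn_sub x (y k)) e]
    rfl
  have h1 : Filter.Tendsto (fun k => ‖y k - x‖) Filter.atTop (nhds 0) :=
    tendsto_iff_norm_sub_tendsto_zero.1 h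
  have h2 : Filter.Tendsto (fun k => ‖x - y k‖ ^ 2) Filter.atTop (nhds 0) := by
    have h3 : (fun k => ‖x - y k‖ ^ 2) = fun k => ‖y k - x‖ * ‖y k - x‖ := by
      funext k
      rw [norm_sub_rev, sq]
    rw [h3]
    simpa using h1.mul h1
  have h4 : (fun k => ∑' e, (x e - y k e) ^ 2) = fun k => ‖x - y k‖ ^ 2 := by
    funext k
    rw [key k]
  rw [h4]
  exact h2

/-- The submodule of `ℓ²(E)` consisting of finitely supported closed cochains. -/
noncomputable def fcSub : Submodule ℝ (lp (fun _ : ↥O.E => ℝ) 2) where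
  carrier := {x | O.FinClosed ⇑x}
  zero_mem' := by
    refine ⟨?_, fun v => ?_⟩
    · rw [lp.coeFn_zero]
      simp
    · rw [lp.coeFn_zero]
      exact O.bdry_zero v
  add_mem' := by
    intro a b ha hb
    refine ⟨?_, fun v => ?_⟩
    · rw [lp.coeFn_add]
      exact ((ha.1.union hb.1).subset (Function.support_add _ _))
    · rw [lp.coeFn_add, O.bdry_add_of_finsupp ha.1 hb.1, ha.2 v, hb.2 v]
      ring
  smul_mem' := by
    intro c x hx
    refine ⟨?_, fun v => ?_⟩
    · rw [lp.coeFn_smul]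
      refine hx.1.subset fun e he => ?_
      rw [Function.mem_support] at he ⊢
      intro h0
      apply he
      rw [Pi.smul_apply, h0, smul_zero]
    · rw [lp.coeFn_smul, O.bdry_smul, hx.2 v, mul_zero]

lemma mem_fcClosure_iff (x : lp (fun _ : ↥O.E => ℝ) 2) :
    x ∈ O.fcSub.topologicalClosure ↔ O.MemL2oc ⇑x := by
  constructor
  · intro hx
    have hx' : x ∈ closure (O.fcSub : Set (lp (fun _ : ↥O.E => ℝ) 2)) := by
      rw [← Submodule.topologicalClosure_coe]
      exact hx
    obtain ⟨w, hw, hwt⟩ := mem_closure_iff_seq_limit.1 hx'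
    refine ⟨fun k => ⇑(w k), fun k => hw k, fun k => ?_, ?_⟩
    · have hmem := O.summable_sq_of_memℓp (x - w k).2
      refine hmem.congr fun e => ?_
      rw [congrFun (lp.coeFn_sub x (w k)) e]
      rfl
    · exact O.tendsto_tsum_sq x w hwt
  · rintro ⟨F, hFfc, hFsum, hFtend⟩
    have hFk : ∀ k, Memℓp (F k) 2 := fun k => O.memℓp_of_finsupp (hFfc k).1
    have hx' : x ∈ closure (O.fcSub : Set (lp (fun _ : ↥O.E => ℝ) 2)) :=
      mem_closure_iff_seq_limit.2 ⟨fun k => ⟨F k, hFk k⟩, fun k => hFfc k,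
        O.tendsto_of_tsum_sq x _ hFtend⟩
    rw [← Submodule.topologicalClosure_coe] at hx'
    exact hx'

lemma bdry_eq_zero_of_memL2oc (hdeg : O.BddDegree) (x : lp (fun _ : ↥O.E => ℝ) 2)
    (hx : O.MemL2oc ⇑x) (v : V) : O.bdry (⇑x) v = 0 := by
  obtain ⟨F, hFfc, hFsum, hFtend⟩ := hx
  have hFk : ∀ k, Memℓp (F k) 2 := fun k => O.memℓp_of_finsupp (hFfc k).1
  set y : ℕ → lp (fun _ : ↥O.E => ℝ) 2 := fun k => ⟨F k, hFk k⟩ with hydef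
  have hy : Filter.Tendsto y Filter.atTop (nhds x) := O.tendsto_of_tsum_sq x y hFtend
  obtain ⟨C, hC0, hC⟩ := O.bdry_bound hdeg v
  have key : ∀ k, |O.bdry (⇑x) v| ≤ C * ‖x - y k‖ := by
    intro k
    have h1 : O.bdry (⇑x - ⇑(y k)) v = O.bdry (⇑x) v - O.bdry (⇑(y k)) v :=
      O.bdry_sub_of_bddDegree hdeg _ _ v
    have h2 : O.bdry (⇑(y k)) v = 0 := (hFfc k).2 v
    have h3 := hC (x - y k)
    rw [lp.coeFn_sub, h1, h2, sub_zero] at h3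
    exact h3
  have hnorm : Filter.Tendsto (fun k => C * ‖x - y k‖) Filter.atTop (nhds 0) := by
    have h4 : Filter.Tendsto (fun k => ‖x - y k‖) Filter.atTop (nhds 0) := by
      have h5 := tendsto_iff_norm_sub_tendsto_zero.1 hy
      have h6 : (fun k => ‖y k - x‖) = fun k => ‖x - y k‖ := by
        funext k
        rw [norm_sub_rev]
      rwa [h6] at h5
    simpa using h4.const_mul C
  have hle : |O.bdry (⇑x) v| ≤ 0 := ge_of_tendsto hnorm (Filter.Eventually.of_forall key)
  exact abs_eq_zero.1 (le_antisymm hle (abs_nonneg _))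

end OriGraph

/-- **Hodge-type decomposition.**  Inside the closed 1-cochains of `ℓ²(E)`,
the orthogonal complement of `ℓ²_{0,c}(E)` is exactly the set of square-summable closed
cochains of the form `du(e) = u(end e) − u(beg e)`; equivalently, every square-summable
closed 1-cochain decomposes orthogonally and uniquely as `f = f₀ + du` with
`f₀ ∈ ℓ²_{0,c}(E)` and `du` closed. -/
theorem coexact_stmt_2 {V : Type*} [Countable V] (O : OriGraph V)
    (hconn : O.G.Connected) (hdeg : O.BddDegree) :
    ({g : ↥O.E → ℝ | Summable (fun e => g e ^ 2) ∧ (∀ v, O.bdry g v = 0) ∧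
        ∀ f : ↥O.E → ℝ, O.MemL2oc f → ∑' e, f e * g e = 0} =
      {g : ↥O.E → ℝ | Summable (fun e => g e ^ 2) ∧ (∀ v, O.bdry g v = 0) ∧
        ∃ u : V → ℝ, ∀ e : ↥O.E, g e = u (e : V × V).2 - u (e : V × V).1}) ∧
    ∀ f : ↥O.E → ℝ, Summable (fun e => f e ^ 2) → (∀ v, O.bdry f v = 0) →
      ∃! p : (↥O.E → ℝ) × (↥O.E → ℝ), f = p.1 + p.2 ∧ O.MemL2oc p.1 ∧
        Summable (fun e => p.2 e ^ 2) ∧ (∀ v, O.bdry p.2 v = 0) ∧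
        (∃ u : V → ℝ, ∀ e : ↥O.E, p.2 e = u (e : V × V).2 - u (e : V × V).1) ∧
        ∑' e, p.1 e * p.2 e = 0 := by
  classical
  haveI : Fact ((1 : ENNReal) ≤ 2) := ⟨by norm_num⟩
  constructor
  · ext g
    simp only [Set.mem_setOf_eq]
    constructor
    · rintro ⟨hs, hc, horth⟩
      exact ⟨hs, hc, O.exists_grad hconn fun f hf => horth f (O.finClosed_memL2oc hf)⟩
    · rintro ⟨hs, hc, u, hu⟩
      refine ⟨hs, hc, fun f hf => ?_⟩
      obtain ⟨F, hFfc, hFsum, hFtend⟩ := hf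
      have hFk : ∀ k, Memℓp (F k) 2 := fun k => O.memℓp_of_finsupp (hFfc k).1
      have hfmem : Memℓp f 2 := by
        have hdiff : Memℓp (fun e => f e - F 0 e) 2 := O.memℓp_of_summable_sq (hFsum 0)
        have heq : f = (fun e => f e - F 0 e) + F 0 := by
          funext e
          simp
        rw [heq]
        exact hdiff.add (hFk 0)
      set x : lp (fun _ : ↥O.E => ℝ) 2 := ⟨f, hfmem⟩ with hxdef
      set z : lp (fun _ : ↥O.E => ℝ) 2 := ⟨g, O.memℓp_of_summable_sq hs⟩ with hzdef
      set y : ℕ → lp (fun _ : ↥O.E => ℝ) 2 := fun k => ⟨F k, hFk k⟩ with hydef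
      have hy : Filter.Tendsto y Filter.atTop (nhds x) := O.tendsto_of_tsum_sq x y hFtend
      have hzero : ∀ k, (inner ℝ (y k) z : ℝ) = 0 := by
        intro k
        rw [O.inner_eq]
        have h1 : ∑' e, (y k) e * z e = ∑' e, F k e * (u (e : V × V).2 - u (e : V × V).1) :=
          tsum_congr fun e => by
            rw [show ((y k) e : ℝ) = F k e from rfl, show (z e : ℝ) = g e from rfl, hu e]
        rw [h1]
        exact O.tsum_finClosed_mul_grad u (hFfc k)
      have hlim : Filter.Tendsto (fun k => (inner ℝ (y k) z : ℝ)) Filter.atTop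
          (nhds (inner ℝ x z)) := hy.inner tendsto_const_nhds
      have hinner : (inner ℝ x z : ℝ) = 0 := by
        refine tendsto_nhds_unique hlim ?_
        simp only [hzero]
        exact tendsto_const_nhds
      calc ∑' e, f e * g e = (inner ℝ x z : ℝ) := (O.inner_eq x z).symm
        _ = 0 := hinner
  · intro f hs hc
    set K : Submodule ℝ (lp (fun _ : ↥O.E => ℝ) 2) := O.fcSub.topologicalClosure with hKdef
    haveI : CompleteSpace K := (Submodule.isClosed_topologicalClosure _).completeSpace_coe
    set x : lp (fun _ : ↥O.E => ℝ) 2 := ⟨f, O.memℓp_of_summable_sq hs⟩ with hxdef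
    obtain ⟨y, hyK, z, hzK, hxyz⟩ := K.exists_add_mem_mem_orthogonal x
    have hcoe : f = ⇑y + ⇑z := by
      have h1 : ⇑x = ⇑(y + z) := by rw [← hxyz]
      rw [lp.coeFn_add] at h1
      exact h1
    have hyL2 : O.MemL2oc ⇑y := (O.mem_fcClosure_iff y).1 hyK
    have horthz : ∀ f' : ↥O.E → ℝ, O.FinClosed f' → ∑' e, f' e * z e = 0 := by
      intro f' hf'
      have hmem : (⟨f', O.memℓp_of_finsupp hf'.1⟩ : lp (fun _ : ↥O.E => ℝ) 2) ∈ K :=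
        Submodule.le_topologicalClosure _ (show _ ∈ O.fcSub from hf')
      have h1 := (Submodule.mem_orthogonal _ z).1 hzK _ hmem
      rw [O.inner_eq] at h1
      exact h1
    have hbdry_y : ∀ v, O.bdry (⇑y) v = 0 := fun v => O.bdry_eq_zero_of_memL2oc hdeg y hyL2 v
    have hzxy : ⇑z = ⇑x - ⇑y := by
      have h1 : ⇑x = ⇑(y + z) := by rw [← hxyz]
      rw [lp.coeFn_add] at h1
      funext e
      have := congrFun h1 e
      simp only [Pi.add_apply, Pi.sub_apply] at this ⊢
      linarith
    have hbdry_z : ∀ v, O.bdry (⇑z) v = 0 := by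
      intro v
      rw [hzxy, O.bdry_sub_of_bddDegree hdeg _ _ v, hbdry_y v]
      have h2 : O.bdry (⇑x) v = 0 := hc v
      rw [h2]
      ring
    have hinneryz : ∑' e, y e * z e = 0 := by
      have h1 := (Submodule.mem_orthogonal _ z).1 hzK y hyK
      rw [O.inner_eq] at h1
      exact h1
    refine ⟨(⇑y, ⇑z), ⟨hcoe, hyL2, O.summable_sq_of_memℓp z.2, hbdry_z,
      O.exists_grad hconn horthz, hinneryz⟩, ?_⟩
    rintro ⟨q1, q2⟩ ⟨hq, hq1, hq2s, hq2b, ⟨u, hu⟩, hqi⟩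
    simp only at hq hq1 hq2s hq2b hu hqi
    have hq2m : Memℓp q2 2 := O.memℓp_of_summable_sq hq2s
    have hq1m : Memℓp q1 2 := by
      have heq : q1 = fun e => f e - q2 e := by
        funext e
        have := congrFun hq e
        simp only [Pi.add_apply] at this
        linarith
      rw [heq]
      exact (O.memℓp_of_summable_sq hs).sub hq2m
    set y' : lp (fun _ : ↥O.E => ℝ) 2 := ⟨q1, hq1m⟩ with hy'def
    set z' : lp (fun _ : ↥O.E => ℝ) 2 := ⟨q2, hq2m⟩ with hz'def
    have hxyz' : x = y' + z' := by
      apply lp.ext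
      rw [lp.coeFn_add]
      funext e
      have := congrFun hq e
      simp only [Pi.add_apply] at this ⊢
      exact this
    have hy'K : y' ∈ K := (O.mem_fcClosure_iff y').2 hq1
    have hz'K : z' ∈ Kᗮ := by
      have hker : K ≤ LinearMap.ker (innerSL ℝ z').toLinearMap := by
        apply Submodule.topologicalClosure_minimal
        · intro w hw
          rw [LinearMap.mem_ker]
          show (inner ℝ z' w : ℝ) = 0
          rw [real_inner_comm, O.inner_eq]
          have h1 : ∑' e, w e * z' e = ∑' e, w e * (u (e : V × V).2 - u (e : V × V).1) :=
            tsum_congr fun e => by rw [show (z' e : ℝ) = q2 e from rfl, hu e]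
          rw [h1]
          exact O.tsum_finClosed_mul_grad u hw
        · exact ContinuousLinearMap.isClosed_ker _
      rw [Submodule.mem_orthogonal]
      intro w hwK
      have h1 := hker hwK
      rw [LinearMap.mem_ker] at h1
      have h2 : (inner ℝ z' w : ℝ) = 0 := h1
      rw [real_inner_comm] at h2
      exact h2
    have hdiffK : y' - y ∈ K := Submodule.sub_mem _ hy'K hyK
    have hdiffKo : y' - y ∈ Kᗮ := by
      have hsum : y + z = y' + z' := by rw [← hxyz, ← hxyz']
      have heq : y' - y = z - z' := by
        rw [sub_eq_sub_iff_add_eq_add]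
        rw [← hsum]
        abel
      rw [heq]
      exact Submodule.sub_mem _ hzK hz'K
    have h0 : y' - y = 0 := by
      have h1 := (Submodule.mem_orthogonal _ _).1 hdiffKo _ hdiffK
      exact inner_self_eq_zero.1 h1
    have hy'y : y' = y := by rwa [sub_eq_zero] at h0
    have hz'z : z' = z := by
      have hsum : y + z = y' + z' := by rw [← hxyz, ← hxyz']
      rw [hy'y] at hsum
      exact (add_left_cancel hsum).symm
    have hq1e : q1 = ⇑y := by rw [show q1 = ⇑y' from rfl, hy'y]
    have hq2e : q2 = ⇑z := by rw [show q2 = ⇑z' from rfl, hz'z]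
    simp only [Prod.mk.injEq]
    exact ⟨hq1e, hq2e⟩
end

section
/- Let Γ, S be as described, let D ≥ 1 be an integer, and let C > 20 and x ≥ 1 be real numbers. Let a, b, c ∈ Γ, let w be a geodesic walk from a to b, and let u be a geodesic walk from b to c; assume dist(a,b) ≤ dist(a,p) for every vertex p of u (i.e. [a,b] is a perpendicular to the geodesic segment [b,c]). Let a₁ be a vertex of w with dist(a₁,c) ≤ dist(p,c) for every vertex p of w (a point of [a,b] closest to c). If dist(a₁,b) > 2·C·D·x, then there exist an integer L > 2·D·C·x and an injective cyclic path γ : ZMod L → Γ of length L such that for all t₁, t₂ ∈ ZMod L, dist(γ(t₁), γ(t₂)) ≤ x implies dist_{ZMod L}(t₁, t₂) ≤ C·x. -/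
open SimpleGraph

/-- The Cayley graph of a group `Γ` with respect to a finite generating set `S`:
distinct `g, h` are adjacent iff `g⁻¹ * h ∈ S ∪ S⁻¹`. -/
def cayley {Γ : Type*} [Group Γ] (S : Finset Γ) : SimpleGraph Γ where
  Adj g h := g ≠ h ∧ (g⁻¹ * h ∈ S ∨ h⁻¹ * g ∈ S)
  symm := by constructor; rintro g h ⟨hne, hmem⟩; exact ⟨hne.symm, hmem.symm⟩
  loopless := by constructor; rintro g ⟨hne, _⟩; exact hne rfl

/-- A cyclic path of length `L` in `Cay(Γ,S)`: a map `γ : ZMod L → Γ` such that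
consecutive values differ by a generator or an inverse of a generator. -/
def IsCyclicPath {Γ : Type*} [Group Γ] (S : Finset Γ) (L : ℕ) (γ : ZMod L → Γ) : Prop :=
  ∀ t : ZMod L, (γ t)⁻¹ * γ (t + 1) ∈ (S : Set Γ) ∪ ((S : Set Γ))⁻¹

/-- The cyclic distance on `ZMod L`: the least `|k|` over integers `k` with `t₂ = t₁ + k`. -/
noncomputable def zdist (L : ℕ) (t₁ t₂ : ZMod L) : ℕ :=
  sInf {n : ℕ | ∃ k : ℤ, k.natAbs = n ∧ t₂ = t₁ + (k : ZMod L)}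

section aux
variable {V : Type*} {G : SimpleGraph V} {α β : V}

lemma aux_getVert_mem_support (p : G.Walk α β) (n : ℕ) : p.getVert n ∈ p.support := by
  by_cases h : n ≤ p.length
  · exact SimpleGraph.Walk.mem_support_iff_exists_getVert.mpr ⟨n, rfl, h⟩
  · rw [p.getVert_of_length_le (le_of_not_ge h)]; exact p.end_mem_support

lemma aux_reach_left (p : G.Walk α β) (n : ℕ) : G.Reachable α (p.getVert n) := by
  obtain ⟨q, r, -⟩ := SimpleGraph.Walk.mem_support_iff_exists_append.mp
    (aux_getVert_mem_support p n)
  exact ⟨q⟩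

lemma aux_reach_right (p : G.Walk α β) (n : ℕ) : G.Reachable (p.getVert n) β := by
  obtain ⟨q, r, -⟩ := SimpleGraph.Walk.mem_support_iff_exists_append.mp
    (aux_getVert_mem_support p n)
  exact ⟨r⟩

lemma aux_tri3 {x y z : V} (h1 : G.Reachable x y) (h2 : G.Reachable y z) :
    G.dist x z ≤ G.dist x y + G.dist y z := by
  obtain ⟨p, hp⟩ := h1.exists_walk_length_eq_dist
  obtain ⟨q, hq⟩ := h2.exists_walk_length_eq_dist
  calc G.dist x z ≤ (p.append q).length := SimpleGraph.dist_le _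
  _ = _ := by rw [SimpleGraph.Walk.length_append, hp, hq]

lemma aux_dist_step (p : G.Walk α β) (n : ℕ) :
    G.dist (p.getVert n) (p.getVert (n + 1)) ≤ 1 := by
  by_cases h : n < p.length
  · exact le_trans (SimpleGraph.dist_le (SimpleGraph.Walk.cons (p.adj_getVert_succ h)
      SimpleGraph.Walk.nil)) (by simp)
  · rw [p.getVert_of_length_le (le_of_not_gt h),
      p.getVert_of_length_le (by omega : p.length ≤ n + 1)]
    simp [SimpleGraph.dist_self]

lemma aux_dist_getVert_le (p : G.Walk α β) {m n : ℕ} (h : m ≤ n) :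
    G.dist (p.getVert m) (p.getVert n) ≤ n - m := by
  induction n with
  | zero =>
    have : m = 0 := by omega
    subst this; simp
  | succ n ih =>
    rcases Nat.lt_or_ge m (n+1) with h' | h'
    · have hmn : m ≤ n := by omega
      have := aux_tri3 (G := G)
        ((aux_reach_left p m).symm.trans (aux_reach_left p n))
        ((aux_reach_left p n).symm.trans (aux_reach_left p (n+1)))
      have h2 := aux_dist_step p n
      have h3 := ih hmn
      omega
    · have : m = n + 1 := by omega
      subst this
      simp

lemma aux_geo (p : G.Walk α β) (hp : p.length = G.dist α β) {m n : ℕ}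
    (hmn : m ≤ n) (hn : n ≤ p.length) :
    G.dist (p.getVert m) (p.getVert n) = n - m := by
  have h1 : G.dist α (p.getVert m) ≤ m := by
    have := aux_dist_getVert_le p (Nat.zero_le m); rwa [p.getVert_zero, Nat.sub_zero] at this
  have h2 : G.dist (p.getVert n) β ≤ p.length - n := by
    have := aux_dist_getVert_le p hn; rwa [p.getVert_length] at this
  have h3 := aux_dist_getVert_le p hmn
  have t1 : G.dist α β ≤ G.dist α (p.getVert m) + G.dist (p.getVert m) β :=
    aux_tri3 (aux_reach_left p m) (aux_reach_right p m)
  have t2 : G.dist (p.getVert m) β ≤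
      G.dist (p.getVert m) (p.getVert n) + G.dist (p.getVert n) β :=
    aux_tri3 ((aux_reach_right p m).trans (aux_reach_right p n).symm) (aux_reach_right p n)
  omega

end aux

lemma aux_zdist_le {L : ℕ} (t₁ t₂ : ZMod L) (k : ℤ) (h : t₂ = t₁ + (k : ZMod L)) :
    zdist L t₁ t₂ ≤ k.natAbs :=
  Nat.sInf_le ⟨k, rfl, h⟩

lemma aux_zdist_comm (L : ℕ) (t₁ t₂ : ZMod L) : zdist L t₁ t₂ = zdist L t₂ t₁ := by
  unfold zdist
  congr 1
  ext n
  constructor <;> rintro ⟨k, hk, he⟩ <;>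
    exact ⟨-k, by simpa using hk, by rw [he]; push_cast; ring⟩

theorem aux_main {V : Type*} (G : SimpleGraph V) (X : ℕ) (hX1 : 1 ≤ X)
    (a b c a₁ : V)
    (w : G.Walk a b) (hw : w.length = G.dist a b)
    (u : G.Walk b c) (hu : u.length = G.dist b c)
    (hperp : ∀ p ∈ u.support, G.dist a b ≤ G.dist a p)
    (ha₁ : a₁ ∈ w.support)
    (hclosest : ∀ p ∈ w.support, G.dist a₁ c ≤ G.dist p c)
    (hd40 : 40 * X < G.dist a₁ b) :
    ∃ (L : ℕ) (γ0 : ℕ → V),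
      2 * G.dist a₁ b ≤ L + X ∧
      (∀ t, t < L → G.Adj (γ0 t) (γ0 (t + 1))) ∧
      γ0 L = γ0 0 ∧
      (∀ s t, s ≤ t → t < L → γ0 s = γ0 t → s = t) ∧
      (∀ s t, s ≤ t → t < L → G.dist (γ0 s) (γ0 t) ≤ X →
        (t - s ≤ 3 * X ∨ (L - t) + s ≤ 3 * X)) := by
  classical
  obtain ⟨i₀, hi₀v, hi₀le⟩ := SimpleGraph.Walk.mem_support_iff_exists_getVert.mp ha₁
  set d := G.dist a₁ b with hddef
  have hi₀d : i₀ + d = w.length := by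
    have h := aux_geo w hw hi₀le le_rfl
    rw [hi₀v, SimpleGraph.Walk.getVert_length] at h
    omega
  set wfun : ℕ → V := fun i => w.getVert (i₀ + i) with hwfundef
  have hwfun0 : wfun 0 = a₁ := by
    show w.getVert (i₀ + 0) = a₁
    rw [Nat.add_zero, hi₀v]
  have hwfund : wfun d = b := by
    show w.getVert (i₀ + d) = b
    rw [hi₀d, SimpleGraph.Walk.getVert_length]
  have dw : ∀ i i', i ≤ i' → i' ≤ d → G.dist (wfun i) (wfun i') = i' - i := by
    intro i i' h1 h2
    have h := aux_geo w hw (show i₀ + i ≤ i₀ + i' by omega) (show i₀ + i' ≤ w.length by omega)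
    exact h.trans (by omega)
  set ufun : ℕ → V := fun j => u.getVert j with hufundef
  have hufun0 : ufun 0 = b := u.getVert_zero
  have hufune : ufun u.length = c := u.getVert_length
  have du : ∀ j j', j ≤ j' → j' ≤ u.length → G.dist (ufun j) (ufun j') = j' - j := by
    intro j j' h1 h2
    exact aux_geo u hu h1 h2
  have Rwb : ∀ i, G.Reachable (wfun i) b := fun i => aux_reach_right w (i₀ + i)
  have Rub : ∀ j, G.Reachable (ufun j) b := fun j => (aux_reach_left u j).symm
  have Rcb : G.Reachable c b := ⟨u.reverse⟩
  have Rab : G.Reachable a b := ⟨w⟩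
  have Ra1b : G.Reachable a₁ b := hwfun0 ▸ Rwb 0
  have Ra1c : G.Reachable a₁ c := Ra1b.trans ⟨u⟩
  obtain ⟨vc, hvclen⟩ := Ra1c.exists_walk_length_eq_dist
  set g := G.dist a₁ c with hgdef
  set vfun : ℕ → V := fun k => vc.getVert k with hvfundef
  have hvfun0 : vfun 0 = a₁ := vc.getVert_zero
  have hvfung : vfun g = c := by
    show vc.getVert g = c
    rw [← hvclen, SimpleGraph.Walk.getVert_length]
  have dv : ∀ k k', k ≤ k' → k' ≤ g → G.dist (vfun k) (vfun k') = k' - k := by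
    intro k k' h1 h2
    exact aux_geo vc hvclen h1 (by omega)
  have Rvb : ∀ k, G.Reachable (vfun k) b := fun k => (aux_reach_right vc k).trans Rcb
  have tri : ∀ x' y' z' : V, G.Reachable x' b → G.Reachable y' b → G.Reachable z' b →
      G.dist x' z' ≤ G.dist x' y' + G.dist y' z' := fun _ _ _ hx' hy' hz' =>
    aux_tri3 (hx'.trans hy'.symm) (hy'.trans hz'.symm)
  -- fat corner at b
  have hD2 : ∀ i, i ≤ d → ∀ j, d ≤ i + G.dist (wfun i) (ufun j) := by
    intro i hi j
    have h1 : G.dist a (ufun j) ≤ G.dist a (wfun i) + G.dist (wfun i) (ufun j) :=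
      tri _ _ _ Rab (Rwb i) (Rub j)
    have h2 : G.dist a (wfun i) = i₀ + i := by
      have h := aux_geo w hw (Nat.zero_le (i₀ + i)) (show i₀ + i ≤ w.length by omega)
      rw [w.getVert_zero] at h
      exact h.trans (by omega)
    have h3 := hperp (ufun j) (aux_getVert_mem_support u j)
    rw [← hw] at h3
    omega
  -- fat corner at a₁
  have hD3 : ∀ i, i ≤ d → ∀ k, k ≤ g → k ≤ G.dist (wfun i) (vfun k) := by
    intro i hi k hk
    have h1 : g ≤ G.dist (wfun i) c := hclosest _ (aux_getVert_mem_support w (i₀ + i))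
    have h2 : G.dist (wfun i) c ≤ G.dist (wfun i) (vfun k) + G.dist (vfun k) c :=
      tri _ _ _ (Rwb i) (Rvb k) Rcb
    have h3 : G.dist (vfun k) c = g - k := by
      have h := dv k g hk le_rfl
      rwa [hvfung] at h
    omega
  -- minimal close pair between u and vc
  have hPne : ∃ n, ∃ j k : ℕ, j ≤ u.length ∧ k ≤ g ∧ j + k = n ∧
      G.dist (ufun j) (vfun k) ≤ X := by
    refine ⟨u.length + g, u.length, g, le_rfl, le_rfl, rfl, ?_⟩
    rw [hufune, hvfung, SimpleGraph.dist_self]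
    omega
  have hPN := Nat.sInf_mem (s := {n | ∃ j k : ℕ, j ≤ u.length ∧ k ≤ g ∧ j + k = n ∧
      G.dist (ufun j) (vfun k) ≤ X}) hPne
  obtain ⟨J, K, hJe, hKg, hJKN, distJK⟩ := hPN
  have hmin : ∀ j k, j ≤ u.length → k ≤ g → G.dist (ufun j) (vfun k) ≤ X →
      J + K ≤ j + k := by
    intro j k h1 h2 h3
    rw [hJKN]
    exact Nat.sInf_le ⟨j, k, h1, h2, rfl, h3⟩
  -- the bridge
  have Rjk : G.Reachable (ufun J) (vfun K) := (Rub J).trans (Rvb K).symm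
  obtain ⟨bw, hbw⟩ := Rjk.exists_walk_length_eq_dist
  set l0 := bw.length with hl0def
  have hl0X : l0 ≤ X := by rw [hbw]; exact distJK
  set bfun : ℕ → V := fun l => bw.getVert l with hbfundef
  have hbfun0 : bfun 0 = ufun J := bw.getVert_zero
  have hbfunl0 : bfun l0 = vfun K := bw.getVert_length
  have db : ∀ l l', l ≤ l' → l' ≤ l0 → G.dist (bfun l) (bfun l') = l' - l := by
    intro l l' h1 h2
    exact aux_geo bw hbw h1 h2
  have Rbb : ∀ l, G.Reachable (bfun l) b := fun l =>
    ((aux_reach_left bw l).symm).trans (Rub J)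
  have hKd : d ≤ K + X := by
    have h1 := hD2 0 (Nat.zero_le d) J
    have h2 : G.dist (wfun 0) (ufun J) ≤ G.dist (wfun 0) (vfun K) + G.dist (vfun K) (ufun J) :=
      tri _ _ _ (Rwb 0) (Rvb K) (Rub J)
    have h3 : G.dist (wfun 0) (vfun K) = K := by
      rw [hwfun0, ← hvfun0]
      have h := dv 0 K (Nat.zero_le K) hKg
      omega
    have h4 : G.dist (vfun K) (ufun J) ≤ X := by
      rw [SimpleGraph.dist_comm]; exact distJK
    omega
  set L := d + J + l0 + K with hLdef
  -- the cyclic path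
  set γ0 : ℕ → V := fun t =>
    if t ≤ d then wfun t
    else if t ≤ d + J then ufun (t - d)
    else if t ≤ d + J + l0 then bfun (t - d - J)
    else vfun (L - t) with hγ0def
  have fW : ∀ t, t ≤ d → γ0 t = wfun t := by
    intro t h; simp only [hγ0def, if_pos h]
  have fU : ∀ t, d ≤ t → t ≤ d + J → γ0 t = ufun (t - d) := by
    intro t h1 h2
    by_cases h : t ≤ d
    · have ht : t = d := le_antisymm h h1
      subst ht
      simp only [hγ0def, if_pos le_rfl]
      rw [hwfund, Nat.sub_self, hufun0]
    · simp only [hγ0def, if_neg h, if_pos h2]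
  have fB : ∀ t, d + J ≤ t → t ≤ d + J + l0 → γ0 t = bfun (t - d - J) := by
    intro t h1 h2
    by_cases h : t ≤ d
    · have hJ0 : J = 0 := by omega
      have ht : t = d := by omega
      have e : t - d - J = 0 := by omega
      rw [fW t h, e, hbfun0, hJ0, hufun0, ht, hwfund]
    · by_cases h' : t ≤ d + J
      · have ht : t = d + J := by omega
        have e : t - d - J = 0 := by omega
        have e2 : t - d = J := by omega
        rw [fU t (by omega) h', e, e2, hbfun0]
      · simp only [hγ0def, if_neg h, if_neg h', if_pos h2]
  have fV : ∀ t, d + J + l0 ≤ t → t ≤ L → γ0 t = vfun (L - t) := by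
    intro t h1 h2
    by_cases h'' : t ≤ d + J + l0
    · have ht : t = d + J + l0 := by omega
      have e : L - t = K := by omega
      have e2 : t - d - J = l0 := by omega
      rw [fB t (by omega) h'', e, e2, hbfunl0]
    · by_cases h : t ≤ d
      · omega
      · by_cases h' : t ≤ d + J
        · omega
        · simp only [hγ0def, if_neg h, if_neg h', if_neg h'']
  refine ⟨L, γ0, by omega, ?_, ?_, ?_, ?_⟩
  · -- adjacency
    intro t ht
    rcases (show t < d ∨ (d ≤ t ∧ t < d + J) ∨ (d + J ≤ t ∧ t < d + J + l0) ∨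
        (d + J + l0 ≤ t ∧ t < L) by omega) with h | ⟨h1, h2⟩ | ⟨h1, h2⟩ | ⟨h1, h2⟩
    · rw [fW t (by omega), fW (t+1) (by omega)]
      exact w.adj_getVert_succ (by omega)
    · rw [fU t h1 (by omega), fU (t+1) (by omega) (by omega)]
      have e : t + 1 - d = (t - d) + 1 := by omega
      rw [e]
      exact u.adj_getVert_succ (by omega)
    · rw [fB t h1 (by omega), fB (t+1) (by omega) (by omega)]
      have e : t + 1 - d - J = (t - d - J) + 1 := by omega
      rw [e]
      exact bw.adj_getVert_succ (by omega)
    · rw [fV t h1 (by omega), fV (t+1) (by omega) (by omega)]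
      have e : L - t = (L - (t+1)) + 1 := by omega
      rw [e]
      exact (vc.adj_getVert_succ (by omega)).symm
  · -- wrap-around
    rw [fV L (by omega) le_rfl, fW 0 (Nat.zero_le d)]
    rw [Nat.sub_self, hvfun0, hwfun0]
  · -- injectivity
    intro s t hst htL heq
    have hδ : G.dist (γ0 s) (γ0 t) = 0 := by rw [heq, SimpleGraph.dist_self]
    rcases (show s ≤ d ∨ (d < s ∧ s ≤ d + J) ∨ (d + J < s ∧ s ≤ d + J + l0) ∨
        (d + J + l0 < s) by omega) with hs | ⟨hs1, hs2⟩ | ⟨hs1, hs2⟩ | hs1 <;>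
    rcases (show t ≤ d ∨ (d < t ∧ t ≤ d + J) ∨ (d + J < t ∧ t ≤ d + J + l0) ∨
        (d + J + l0 < t) by omega) with ht | ⟨ht1, ht2⟩ | ⟨ht1, ht2⟩ | ht1
    -- W W
    · rw [fW s hs, fW t ht] at hδ
      have := dw s t hst ht
      omega
    -- W U
    · rw [fW s hs, fU t (by omega) ht2] at hδ
      have e1 := hD2 s hs (t - d)
      have e2 : G.dist b (ufun (t-d)) ≤ G.dist b (wfun s) + G.dist (wfun s) (ufun (t-d)) :=
        tri _ _ _ (Reachable.refl b) (Rwb s) (Rub (t-d))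
      have e3 : G.dist b (ufun (t-d)) = t - d := by
        have h := du 0 (t-d) (Nat.zero_le _) (by omega)
        rw [hufun0] at h
        omega
      have e4 : G.dist b (wfun s) = d - s := by
        have h := dw s d hs le_rfl
        rw [hwfund, SimpleGraph.dist_comm] at h
        omega
      omega
    -- W B
    · rw [fW s hs, fB t (by omega) ht2] at hδ
      have e1 := hD3 s hs K hKg
      have e2 : G.dist (wfun s) (vfun K) ≤
          G.dist (wfun s) (bfun (t-d-J)) + G.dist (bfun (t-d-J)) (vfun K) :=
        tri _ _ _ (Rwb s) (Rbb _) (Rvb K)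
      have e3 : G.dist (bfun (t-d-J)) (vfun K) = l0 - (t-d-J) := by
        have h := db (t-d-J) l0 (by omega) le_rfl
        rwa [hbfunl0] at h
      omega
    -- W V
    · rw [fW s hs, fV t (by omega) (by omega)] at hδ
      have e1 := hD3 s hs (L - t) (by omega)
      omega
    -- U W
    · omega
    -- U U
    · rw [fU s (by omega) hs2, fU t (by omega) ht2] at hδ
      have := du (s - d) (t - d) (by omega) (by omega)
      omega
    -- U B
    · rw [fU s (by omega) hs2, fB t (by omega) ht2] at heq
      have h1 : G.dist (ufun (s-d)) (vfun K) ≤ X := by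
        rw [heq]
        have h := db (t-d-J) l0 (by omega) le_rfl
        rw [hbfunl0] at h
        omega
      have h2 := hmin (s-d) K (by omega) hKg h1
      have hsJ : s - d = J := by omega
      rw [hsJ, ← hbfun0] at heq
      have h3 := db 0 (t-d-J) (Nat.zero_le _) (by omega)
      rw [← heq, SimpleGraph.dist_self] at h3
      omega
    -- U V
    · rw [fU s (by omega) hs2, fV t (by omega) (by omega)] at heq
      have h1 : G.dist (ufun (s-d)) (vfun (L-t)) ≤ X := by
        rw [heq, SimpleGraph.dist_self]
        omega
      have h2 := hmin (s-d) (L-t) (by omega) (by omega) h1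
      omega
    -- B W
    · omega
    -- B U
    · omega
    -- B B
    · rw [fB s (by omega) hs2, fB t (by omega) ht2] at hδ
      have := db (s-d-J) (t-d-J) (by omega) (by omega)
      omega
    -- B V
    · rw [fB s (by omega) hs2, fV t (by omega) (by omega)] at heq
      have h0 := db 0 (s-d-J) (Nat.zero_le _) (by omega)
      rw [hbfun0, heq] at h0
      have h1 : G.dist (ufun J) (vfun (L-t)) ≤ X := by omega
      have h2 := hmin J (L-t) hJe (by omega) h1
      omega
    -- V W
    · omega
    -- V U
    · omega
    -- V B
    · omega
    -- V V
    · rw [fV s (by omega) (by omega), fV t (by omega) (by omega)] at hδ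
      have := dv (L - t) (L - s) (by omega) (by omega)
      rw [SimpleGraph.dist_comm] at hδ
      omega
  · -- chord condition
    intro s t hst htL hδ
    rcases (show s ≤ d ∨ (d < s ∧ s ≤ d + J) ∨ (d + J < s ∧ s ≤ d + J + l0) ∨
        (d + J + l0 < s) by omega) with hs | ⟨hs1, hs2⟩ | ⟨hs1, hs2⟩ | hs1 <;>
    rcases (show t ≤ d ∨ (d < t ∧ t ≤ d + J) ∨ (d + J < t ∧ t ≤ d + J + l0) ∨
        (d + J + l0 < t) by omega) with ht | ⟨ht1, ht2⟩ | ⟨ht1, ht2⟩ | ht1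
    -- W W
    · rw [fW s hs, fW t ht] at hδ
      have := dw s t hst ht
      omega
    -- W U
    · rw [fW s hs, fU t (by omega) ht2] at hδ
      have e1 := hD2 s hs (t - d)
      have e2 : G.dist b (ufun (t-d)) ≤ G.dist b (wfun s) + G.dist (wfun s) (ufun (t-d)) :=
        tri _ _ _ (SimpleGraph.Reachable.refl b) (Rwb s) (Rub (t-d))
      have e3 : G.dist b (ufun (t-d)) = t - d := by
        have h := du 0 (t-d) (Nat.zero_le _) (by omega)
        rw [hufun0] at h
        omega
      have e4 : G.dist b (wfun s) = d - s := by
        have h := dw s d hs le_rfl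
        rw [hwfund, SimpleGraph.dist_comm] at h
        omega
      omega
    -- W B
    · rw [fW s hs, fB t (by omega) ht2] at hδ
      have e1 := hD3 s hs K hKg
      have e2 : G.dist (wfun s) (vfun K) ≤
          G.dist (wfun s) (bfun (t-d-J)) + G.dist (bfun (t-d-J)) (vfun K) :=
        tri _ _ _ (Rwb s) (Rbb _) (Rvb K)
      have e3 : G.dist (bfun (t-d-J)) (vfun K) = l0 - (t-d-J) := by
        have h := db (t-d-J) l0 (by omega) le_rfl
        rwa [hbfunl0] at h
      omega
    -- W V
    · rw [fW s hs, fV t (by omega) (by omega)] at hδ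
      have e1 := hD3 s hs (L - t) (by omega)
      have e2 : G.dist a₁ (wfun s) ≤ G.dist a₁ (vfun (L-t)) + G.dist (vfun (L-t)) (wfun s) :=
        tri _ _ _ Ra1b (Rvb _) (Rwb s)
      have e3 : G.dist a₁ (wfun s) = s := by
        have h := dw 0 s (Nat.zero_le _) hs
        rw [hwfun0] at h
        omega
      have e4 : G.dist a₁ (vfun (L-t)) = L - t := by
        have h := dv 0 (L-t) (Nat.zero_le _) (by omega)
        rw [hvfun0] at h
        omega
      have e5 : G.dist (vfun (L-t)) (wfun s) ≤ X := by
        rw [SimpleGraph.dist_comm]; exact hδ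
      omega
    -- U W
    · omega
    -- U U
    · rw [fU s (by omega) hs2, fU t (by omega) ht2] at hδ
      have := du (s - d) (t - d) (by omega) (by omega)
      omega
    -- U B
    · rw [fU s (by omega) hs2, fB t (by omega) ht2] at hδ
      have e1 : G.dist (ufun (s-d)) (ufun J) = J - (s-d) := du _ J (by omega) hJe
      have e2 : G.dist (ufun (s-d)) (ufun J) ≤
          G.dist (ufun (s-d)) (bfun (t-d-J)) + G.dist (bfun (t-d-J)) (ufun J) :=
        tri _ _ _ (Rub _) (Rbb _) (Rub J)
      have e3 : G.dist (bfun (t-d-J)) (ufun J) = t - d - J := by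
        have h := db 0 (t-d-J) (Nat.zero_le _) (by omega)
        rw [hbfun0, SimpleGraph.dist_comm] at h
        omega
      omega
    -- U V
    · have h2 := hmin (s-d) (L-t) (by omega) (by omega)
          (by rw [← fU s (by omega) hs2, ← fV t (by omega) (by omega)]; exact hδ)
      omega
    -- B W
    · omega
    -- B U
    · omega
    -- B B
    · rw [fB s (by omega) hs2, fB t (by omega) ht2] at hδ
      have := db (s-d-J) (t-d-J) (by omega) (by omega)
      omega
    -- B V
    · rw [fB s (by omega) hs2, fV t (by omega) (by omega)] at hδ
      have e1 : G.dist (vfun (L-t)) (vfun K) = K - (L-t) := dv _ K (by omega) hKg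
      have e2 : G.dist (vfun (L-t)) (vfun K) ≤
          G.dist (vfun (L-t)) (bfun (s-d-J)) + G.dist (bfun (s-d-J)) (vfun K) :=
        tri _ _ _ (Rvb _) (Rbb _) (Rvb K)
      have e3 : G.dist (bfun (s-d-J)) (vfun K) = l0 - (s-d-J) := by
        have h := db (s-d-J) l0 (by omega) le_rfl
        rwa [hbfunl0] at h
      have e4 : G.dist (vfun (L-t)) (bfun (s-d-J)) ≤ X := by
        rw [SimpleGraph.dist_comm]; exact hδ
      omega
    -- V W
    · omega
    -- V U
    · omega
    -- V B
    · omega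
    -- V V
    · rw [fV s (by omega) (by omega), fV t (by omega) (by omega)] at hδ
      have := dv (L - t) (L - s) (by omega) (by omega)
      rw [SimpleGraph.dist_comm] at hδ
      omega

/-- Let `w` be a geodesic walk from `a` to `b` and `u` a geodesic walk
from `b` to `c` with `[a,b]` a perpendicular to `[b,c]`; let `a₁` be a vertex of `w`
closest to `c`.  If `dist(a₁,b) > 2·C·D·x` (with `D ≥ 1`, `C > 20`, `x ≥ 1`), then there
is an injective cyclic path of length `L > 2·D·C·x` satisfying the bilipschitz-type
condition. -/
theorem coexact_stmt_8 {Γ : Type*} [Group Γ] (S : Finset Γ)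
    (D : ℕ) (hD : 1 ≤ D) (C x : ℝ) (hC : 20 < C) (hx : 1 ≤ x)
    (a b c : Γ)
    (w : (cayley S).Walk a b) (hw : w.length = (cayley S).dist a b)
    (u : (cayley S).Walk b c) (hu : u.length = (cayley S).dist b c)
    (hperp : ∀ p ∈ u.support, (cayley S).dist a b ≤ (cayley S).dist a p)
    (a₁ : Γ) (ha₁ : a₁ ∈ w.support)
    (hclosest : ∀ p ∈ w.support, (cayley S).dist a₁ c ≤ (cayley S).dist p c)
    (hlong : 2 * C * (D : ℝ) * x < ((cayley S).dist a₁ b : ℝ)) :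
    ∃ L : ℕ, 2 * (D : ℝ) * C * x < (L : ℝ) ∧
    ∃ γ : ZMod L → Γ, Function.Injective γ ∧ IsCyclicPath S L γ ∧
      ∀ t₁ t₂ : ZMod L, ((cayley S).dist (γ t₁) (γ t₂) : ℝ) ≤ x →
        (zdist L t₁ t₂ : ℝ) ≤ C * x := by
  classical
  have hx0 : (0:ℝ) ≤ x := by linarith
  set X := Nat.floor x with hXdef
  have hXx : (X:ℝ) ≤ x := Nat.floor_le hx0
  have hX1 : 1 ≤ X := Nat.le_floor (by exact_mod_cast hx)
  have hDr : (1:ℝ) ≤ (D:ℝ) := by exact_mod_cast hD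
  have hd40 : 40 * X < (cayley S).dist a₁ b := by
    have hr : (40 * (X:ℝ)) < (((cayley S).dist a₁ b : ℕ) : ℝ) := by
      have h1 : (40:ℝ) * X ≤ 40 * x := by linarith
      have q0 : C * 1 ≤ C * (D:ℝ) := mul_le_mul_of_nonneg_left hDr (by linarith)
      have q2 : (0:ℝ) ≤ (2 * C * (D:ℝ) - 40) * x := mul_nonneg (by linarith) hx0
      nlinarith [q2]
    exact_mod_cast hr
  obtain ⟨L, γ0, hlen, hadj, hwrap, hinj, hchord⟩ :=
    aux_main (cayley S) X hX1 a b c a₁ w hw u hu hperp ha₁ hclosest hd40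
  have hLpos : 1 < L := by omega
  haveI : NeZero L := ⟨by omega⟩
  haveI : Fact (1 < L) := ⟨hLpos⟩
  refine ⟨L, ?_, fun T => γ0 T.val, ?_, ?_, ?_⟩
  · -- length bound
    have hLr : 2 * (((cayley S).dist a₁ b : ℕ) : ℝ) ≤ (L:ℝ) + (X:ℝ) := by
      exact_mod_cast hlen
    have q0 : C * 1 ≤ C * (D:ℝ) := mul_le_mul_of_nonneg_left hDr (by linarith)
    have q2 : (0:ℝ) ≤ (2 * C * (D:ℝ) - 1) * x := mul_nonneg (by linarith) hx0
    nlinarith [hlong, hLr, hXx, q2]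
  · -- injectivity
    intro T1 T2 h
    have h' : γ0 T1.val = γ0 T2.val := h
    have hv : T1.val = T2.val := by
      rcases le_total T1.val T2.val with hle | hle
      · exact hinj _ _ hle (ZMod.val_lt T2) h'
      · exact (hinj _ _ hle (ZMod.val_lt T1) h'.symm).symm
    have e1 : ((T1.val : ℕ) : ZMod L) = T1 := by simp [ZMod.natCast_val, ZMod.cast_id]
    have e2 : ((T2.val : ℕ) : ZMod L) = T2 := by simp [ZMod.natCast_val, ZMod.cast_id]
    rw [← e1, ← e2, hv]
  · -- cyclic path
    unfold IsCyclicPath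
    intro T
    have hvt : T.val < L := ZMod.val_lt T
    have hone : (1 : ZMod L).val = 1 := ZMod.val_one L
    have hv1 : (T + 1).val = (T.val + 1) % L := by rw [ZMod.val_add, hone]
    have hadj2 : (cayley S).Adj (γ0 T.val) (γ0 ((T.val + 1) % L)) := by
      by_cases h : T.val + 1 < L
      · rw [Nat.mod_eq_of_lt h]; exact hadj _ hvt
      · have hTL : T.val + 1 = L := by omega
        have hmod : (T.val + 1) % L = 0 := by rw [hTL, Nat.mod_self]
        have hA := hadj T.val hvt
        rw [hTL, hwrap] at hA
        rw [hmod]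
        exact hA
    have hadj3 : (cayley S).Adj ((fun T : ZMod L => γ0 T.val) T)
        ((fun T : ZMod L => γ0 T.val) (T + 1)) := by
      show (cayley S).Adj (γ0 T.val) (γ0 (T + 1).val)
      rw [hv1]; exact hadj2
    obtain ⟨hne, hor⟩ := hadj3
    rcases hor with h1 | h2
    · exact Set.mem_union_left _ h1
    · refine Set.mem_union_right _ ?_
      rw [Set.mem_inv, mul_inv_rev, inv_inv]
      exact h2
  · -- chord condition
    intro T1 T2 hdist
    have hdX2 : (cayley S).dist (γ0 T1.val) (γ0 T2.val) ≤ X := Nat.le_floor hdist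
    have main2 : ∀ A B : ZMod L, A.val ≤ B.val →
        (cayley S).dist (γ0 A.val) (γ0 B.val) ≤ X → zdist L A B ≤ 3 * X := by
      intro A B hle hd
      have hBL : B.val < L := ZMod.val_lt B
      have e1 : ((A.val : ℕ) : ZMod L) = A := by simp [ZMod.natCast_val, ZMod.cast_id]
      have e2 : ((B.val : ℕ) : ZMod L) = B := by simp [ZMod.natCast_val, ZMod.cast_id]
      rcases hchord A.val B.val hle hBL hd with h | h
      · have hz := aux_zdist_le A B ((B.val : ℤ) - (A.val : ℤ))
          (by push_cast; rw [e1, e2]; ring)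
        have hn : ((B.val : ℤ) - (A.val : ℤ)).natAbs = B.val - A.val := by omega
        omega
      · have hz := aux_zdist_le A B ((B.val : ℤ) - (A.val : ℤ) - (L : ℤ))
          (by push_cast; rw [e1, e2, ZMod.natCast_self]; ring)
        have hn : ((B.val : ℤ) - (A.val : ℤ) - (L : ℤ)).natAbs = (L - B.val) + A.val := by
          omega
        omega
    have hfinal : zdist L T1 T2 ≤ 3 * X := by
      rcases le_total T1.val T2.val with hle | hle
      · exact main2 T1 T2 hle hdX2
      · rw [aux_zdist_comm]
        exact main2 T2 T1 hle (by rwa [SimpleGraph.dist_comm] at hdX2)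
    calc (zdist L T1 T2 : ℝ) ≤ ((3 * X : ℕ) : ℝ) := by exact_mod_cast hfinal
      _ = 3 * (X:ℝ) := by push_cast; ring
      _ ≤ 3 * x := by linarith
      _ ≤ C * x := by nlinarith
end

section
/- For all real numbers a, b with 0 < a ≤ b, there exist a constant K ≥ 0 and a constant c ∈ (0,1) such that for every n ∈ ℕ there is a real polynomial P with degree at most n satisfying |P(t) − 1/t| ≤ K·cⁿ for every t ∈ [a,b]. -/
private lemma coexact_stmt_9_aux (b t : ℝ) (hb : b ≠ 0) (ht : t ≠ 0) (n : ℕ) :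
    1 / b * (((1 - t / b) ^ (n + 1) - 1) / ((1 - t / b) - 1)) - 1 / t
      = -((1 - t / b) ^ (n + 1)) / t := by
  have h : (1 - t / b) - 1 = -(t / b) := by ring
  rw [h]
  have htb : t / b ≠ 0 := div_ne_zero ht hb
  field_simp
  ring

/-- For `0 < a ≤ b` there are `K ≥ 0` and `c ∈ (0,1)` such that for
every `n` there is a real polynomial `P` of degree at most `n` with
`|P(t) − 1/t| ≤ K·cⁿ` on `[a,b]`. -/
theorem coexact_stmt_9 (a b : ℝ) (ha : 0 < a) (hab : a ≤ b) :
    ∃ K : ℝ, 0 ≤ K ∧ ∃ c ∈ Set.Ioo (0 : ℝ) 1, ∀ n : ℕ, ∃ P : Polynomial ℝ,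
      P.natDegree ≤ n ∧ ∀ t ∈ Set.Icc a b, |P.eval t - 1 / t| ≤ K * c ^ n := by
  have hb : 0 < b := lt_of_lt_of_le ha hab
  have hd1 : a / (2 * b) < 1 := by
    rw [div_lt_one (by linarith)]; linarith
  have hd0 : 0 < a / (2 * b) := div_pos ha (by linarith)
  refine ⟨1 / a, by positivity, 1 - a / (2 * b), ⟨by linarith, by linarith⟩, fun n => ?_⟩
  refine ⟨(Finset.range (n + 1)).sum
      (fun k => Polynomial.C (1 / b) * (1 - Polynomial.C (1 / b) * Polynomial.X) ^ k),
    ?_, ?_⟩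
  · apply Polynomial.natDegree_sum_le_of_forall_le
    intro k hk
    refine le_trans (Polynomial.natDegree_mul_le) ?_
    simp only [Polynomial.natDegree_C, zero_add]
    refine le_trans (Polynomial.natDegree_pow_le) ?_
    have h1 : (1 - Polynomial.C (1 / b) * Polynomial.X : Polynomial ℝ).natDegree ≤ 1 := by
      refine le_trans (Polynomial.natDegree_sub_le _ _) ?_
      simp only [Polynomial.natDegree_one, Nat.zero_le, max_le_iff, true_and]
      exact le_trans (Polynomial.natDegree_mul_le) (by simp)
    calc k * (1 - Polynomial.C (1 / b) * Polynomial.X : Polynomial ℝ).natDegree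
        ≤ k * 1 := Nat.mul_le_mul_left k h1
      _ = k := Nat.mul_one k
      _ ≤ n := Nat.lt_succ_iff.mp (Finset.mem_range.mp hk)
  · intro t ht
    obtain ⟨hta, htb⟩ := ht
    have ht0 : 0 < t := lt_of_lt_of_le ha hta
    have hx0 : 0 ≤ 1 - t / b := by
      have : t / b ≤ 1 := (div_le_one hb).mpr htb
      linarith
    have hxc : 1 - t / b ≤ 1 - a / (2 * b) := by
      have : a / (2 * b) ≤ t / b := by
        rw [div_le_div_iff₀ (by linarith) hb]; nlinarith
      linarith
    have hxne : 1 - t / b ≠ 1 := by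
      have : 0 < t / b := div_pos ht0 hb
      intro h; rw [sub_eq_self] at h; exact absurd h (by positivity)
    have heval : Polynomial.eval t ((Finset.range (n + 1)).sum
        (fun k => Polynomial.C (1 / b) * (1 - Polynomial.C (1 / b) * Polynomial.X) ^ k))
        = (1 / b) * ∑ k ∈ Finset.range (n + 1), (1 - t / b) ^ k := by
      rw [Polynomial.eval_finset_sum, Finset.mul_sum]
      apply Finset.sum_congr rfl
      intro k _
      rw [Polynomial.eval_mul, Polynomial.eval_C, Polynomial.eval_pow]
      congr 1
      rw [Polynomial.eval_sub, Polynomial.eval_one, Polynomial.eval_mul, Polynomial.eval_C,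
        Polynomial.eval_X]
      ring
    rw [heval, geom_sum_eq hxne,
      coexact_stmt_9_aux b t hb.ne' ht0.ne' n,
      abs_div, abs_neg, abs_of_pos ht0, abs_of_nonneg (pow_nonneg hx0 _)]
    have hc0 : (0:ℝ) < 1 - a / (2 * b) := by linarith
    have h1 : (1 - t / b) ^ (n + 1) ≤ (1 - a / (2 * b)) ^ (n + 1) :=
      pow_le_pow_left₀ hx0 hxc _
    have h2 : (1 - a / (2 * b)) ^ (n + 1) ≤ (1 - a / (2 * b)) ^ n := by
      calc (1 - a / (2 * b)) ^ (n + 1) = (1 - a / (2 * b)) ^ n * (1 - a / (2 * b)) :=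
            pow_succ _ n
        _ ≤ (1 - a / (2 * b)) ^ n * 1 := by nlinarith [pow_nonneg hc0.le n]
        _ = (1 - a / (2 * b)) ^ n := mul_one _
    rw [div_le_iff₀ ht0]
    calc (1 - t / b) ^ (n + 1) ≤ (1 - a / (2 * b)) ^ n := le_trans h1 h2
      _ = (1 / a * (1 - a / (2 * b)) ^ n) * a := by field_simp
      _ ≤ 1 / a * (1 - a / (2 * b)) ^ n * t := by
          have : 0 ≤ 1 / a * (1 - a / (2 * b)) ^ n := by positivity
          nlinarith
end

section
/- Let H be a complex Hilbert space and let A : H → H be a bounded self-adjoint operator whose spectrum is contained in the real interval [a,b] with 0 < a ≤ b. Then A is invertible, and there exist a constant K ≥ 0 and a constant c ∈ (0,1) such that for every n ∈ ℕ there is a real polynomial P of degree at most n with ‖P(A) − A⁻¹‖ ≤ K·cⁿ, where P(A) denotes the evaluation of P at A (polynomial functional calculus) and ‖·‖ the operator norm. -/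
set_option maxHeartbeats 1000000


/-- Let `A` be a bounded self-adjoint operator on a complex Hilbert
space whose spectrum is contained in `[a,b]` with `0 < a ≤ b`.  Then `A` is invertible,
and there are `K ≥ 0` and `c ∈ (0,1)` such that for every `n` there is a real polynomial
`P` of degree at most `n` with `‖P(A) − A⁻¹‖ ≤ K·cⁿ`. -/
theorem coexact_stmt_10 {H : Type*} [NormedAddCommGroup H] [InnerProductSpace ℂ H]
    [CompleteSpace H] (A : H →L[ℂ] H) (hA : IsSelfAdjoint A)
    (a b : ℝ) (ha : 0 < a) (hab : a ≤ b)
    (hspec : spectrum ℂ A ⊆ (fun t : ℝ => (t : ℂ)) '' Set.Icc a b) :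
    IsUnit A ∧ ∃ K : ℝ, 0 ≤ K ∧ ∃ c ∈ Set.Ioo (0 : ℝ) 1, ∀ n : ℕ, ∃ P : Polynomial ℝ,
      P.natDegree ≤ n ∧
        ‖Polynomial.aeval A (P.map (algebraMap ℝ ℂ)) - Ring.inverse A‖ ≤ K * c ^ n := by
  have hb : (0:ℝ) < b := ha.trans_le hab
  -- invertibility
  rcases subsingleton_or_nontrivial (H →L[ℂ] H) with hsub | hnt
  · refine ⟨isUnit_of_subsingleton A, 0, le_refl 0, 1/2, ⟨by norm_num, by norm_num⟩,
      fun n => ⟨0, by simp, ?_⟩⟩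
    have : (Polynomial.aeval A ((0 : Polynomial ℝ).map (algebraMap ℝ ℂ)) - Ring.inverse A)
        = 0 := Subsingleton.elim _ _
    rw [this, norm_zero]
    positivity
  have hAunit : IsUnit A := by
    apply spectrum.isUnit_of_zero_notMem (R := ℂ)
    intro h0
    obtain ⟨t, ht, hteq⟩ := hspec h0
    have ht0 : t = 0 := by simpa using hteq
    linarith [ht.1]
  set T : H →L[ℂ] H := 1 - ((b:ℝ) : ℂ)⁻¹ • A with hT
  have hTsa : IsSelfAdjoint T := by
    rw [hT]
    have h1 : star (((b:ℝ):ℂ)⁻¹ • A) = ((b:ℝ):ℂ)⁻¹ • A := by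
      rw [star_smul, hA.star_eq, Complex.star_def, ← Complex.ofReal_inv, Complex.conj_ofReal,
        Complex.ofReal_inv]
    rw [IsSelfAdjoint, star_sub, star_one, h1]
  set c : ℝ := 1 - a / (2 * b) with hc
  have hcpos : 0 < c := by
    have h2 : a / (2 * b) < 1 := by
      rw [div_lt_one (by positivity)]
      nlinarith
    simp only [hc]
    linarith
  have hc1 : c < 1 := by
    have : 0 < a / (2 * b) := by positivity
    simp only [hc]; linarith
  -- spectrum of T
  have hTspec : ∀ z ∈ spectrum ℂ T, ‖z‖ ≤ c := by
    intro z hz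
    have hrep : T = Polynomial.aeval A (1 - Polynomial.C (((b:ℝ):ℂ)⁻¹) * Polynomial.X) := by
      simp [hT, Algebra.algebraMap_eq_smul_one, smul_mul_assoc]
    rw [hrep, spectrum.map_polynomial_aeval] at hz
    obtain ⟨w, hw, hwz⟩ := hz
    obtain ⟨t, ht, rfl⟩ := hspec hw
    have hz' : z = ((1 - t / b : ℝ) : ℂ) := by
      rw [← hwz]; simp; push_cast; ring
    rw [hz']
    rw [Complex.norm_real]
    have h1 : 0 ≤ 1 - t / b := by
      have : t / b ≤ 1 := (div_le_one hb).mpr ht.2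
      linarith
    have h2 : 1 - t / b ≤ c := by
      have : a / (2 * b) ≤ t / b := by
        rw [div_le_div_iff₀ (by positivity) hb]
        nlinarith [ht.1]
      simp only [hc]; linarith
    rw [Real.norm_eq_abs, abs_of_nonneg h1]
    exact h2
  -- norm bound on T via spectral radius
  have hTnorm : ‖T‖ ≤ c := by
    have h1 : spectralRadius ℂ T ≤ (c.toNNReal : ENNReal) := by
      rw [spectralRadius]
      refine iSup₂_le fun z hz => ?_
      rw [ENNReal.coe_le_coe, ← NNReal.coe_le_coe, coe_nnnorm,
        Real.coe_toNNReal _ hcpos.le]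
      exact hTspec z hz
    rw [hTsa.spectralRadius_eq_nnnorm, ENNReal.coe_le_coe, ← NNReal.coe_le_coe,
      coe_nnnorm, Real.coe_toNNReal _ hcpos.le] at h1
    exact h1
  refine ⟨hAunit, ‖Ring.inverse A‖ * c, by positivity, c, ⟨hcpos, hc1⟩, fun n => ?_⟩
  -- the polynomial
  refine ⟨Polynomial.C b⁻¹ * ∑ k ∈ Finset.range (n+1),
      (1 - Polynomial.C b⁻¹ * Polynomial.X) ^ k, ?_, ?_⟩
  · refine (Polynomial.natDegree_C_mul_le _ _).trans ?_
    refine Polynomial.natDegree_sum_le_of_forall_le _ _ fun k hk => ?_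
    refine Polynomial.natDegree_pow_le.trans ?_
    have h1 : (1 - Polynomial.C b⁻¹ * Polynomial.X : Polynomial ℝ).natDegree ≤ 1 := by
      refine (Polynomial.natDegree_sub_le _ _).trans ?_
      simp only [Polynomial.natDegree_one, max_le_iff]
      exact ⟨Nat.zero_le _, (Polynomial.natDegree_C_mul_le _ _).trans_eq Polynomial.natDegree_X⟩
    calc k * (1 - Polynomial.C b⁻¹ * Polynomial.X : Polynomial ℝ).natDegree ≤ k * 1 :=
          Nat.mul_le_mul_left _ h1
      _ = k := Nat.mul_one k
      _ ≤ n := Nat.lt_succ_iff.mp (Finset.mem_range.mp hk)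
  · set S : H →L[ℂ] H := ∑ k ∈ Finset.range (n+1), T ^ k with hS
    have hPA : Polynomial.aeval A ((Polynomial.C b⁻¹ * ∑ k ∈ Finset.range (n+1),
        (1 - Polynomial.C b⁻¹ * Polynomial.X) ^ k).map (algebraMap ℝ ℂ)) =
        ((b:ℝ):ℂ)⁻¹ • S := by
      simp [hS, hT, Polynomial.map_mul, Polynomial.map_sum, Polynomial.map_pow,
        Polynomial.map_sub, Polynomial.map_one, Polynomial.map_C, Polynomial.map_X,
        map_sum, map_pow, map_sub, map_mul, Polynomial.aeval_C,
        Algebra.algebraMap_eq_smul_one, smul_mul_assoc]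
    rw [hPA]
    have hgeom : A * (((b:ℝ):ℂ)⁻¹ • S) = 1 - T ^ (n+1) := by
      have h1 : A * (((b:ℝ):ℂ)⁻¹ • S) = (((b:ℝ):ℂ)⁻¹ • A) * S := by
        rw [mul_smul_comm, smul_mul_assoc]
      have h2 : (((b:ℝ):ℂ)⁻¹ • A) = 1 - T := by rw [hT]; abel
      rw [h1, h2, hS]
      have := mul_geom_sum T (n+1)
      have h3 : (1 - T) * ∑ k ∈ Finset.range (n+1), T ^ k =
          -((T - 1) * ∑ k ∈ Finset.range (n+1), T ^ k) := by
        rw [← neg_sub T 1, neg_mul]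
      rw [h3, this, neg_sub]
    have hinv : Ring.inverse A * A = 1 := Ring.inverse_mul_cancel A hAunit
    have key : ((b:ℝ):ℂ)⁻¹ • S - Ring.inverse A = -(Ring.inverse A * T ^ (n+1)) := by
      calc ((b:ℝ):ℂ)⁻¹ • S - Ring.inverse A
          = Ring.inverse A * (A * (((b:ℝ):ℂ)⁻¹ • S)) - Ring.inverse A * 1 := by
            rw [← mul_assoc, hinv, one_mul, mul_one]
        _ = Ring.inverse A * (A * (((b:ℝ):ℂ)⁻¹ • S) - 1) := by rw [mul_sub]
        _ = -(Ring.inverse A * T ^ (n+1)) := by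
            rw [hgeom, sub_sub_cancel_left, mul_neg]
    rw [key, norm_neg]
    calc ‖Ring.inverse A * T ^ (n+1)‖ ≤ ‖Ring.inverse A‖ * ‖T ^ (n+1)‖ := norm_mul_le _ _
      _ ≤ ‖Ring.inverse A‖ * ‖T‖ ^ (n+1) :=
          mul_le_mul_of_nonneg_left (norm_pow_le' T n.succ_pos) (norm_nonneg _)
      _ ≤ ‖Ring.inverse A‖ * c ^ (n+1) := by
          refine mul_le_mul_of_nonneg_left ?_ (norm_nonneg _)
          exact pow_le_pow_left₀ (norm_nonneg _) hTnorm _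
      _ = ‖Ring.inverse A‖ * c * c ^ n := by ring
end

section
/- Let m ≥ 1 and let f : ℤᵐ × Fin m → ℝ be finitely supported with ∂f = 0. Then the family of shifts {τ_u f}_{u∈ℤᵐ} is not a Riesz system in ℓ²(E): for every δ > 0 there exists a finitely supported a : ℤᵐ → ℝ with Σ_u a(u)² > 0 and ‖Σ_{u∈ℤᵐ} a(u)·τ_u f‖²_{ℓ²(E)} < δ·Σ_{u∈ℤᵐ} a(u)². -/
/-- The `j`-th standard generator of `ℤᵐ`. -/
def latGen (m : ℕ) (j : Fin m) : Fin m → ℤ := Pi.single j 1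

/-- The boundary of a 1-cochain `f` on the edge set `E = ℤᵐ × Fin m` of the standard
Cayley graph of `ℤᵐ` (the edge `(v,j)` going from `v` to `v + e_j`):
`∂f(v) = Σ_j (f(v − e_j, j) − f(v, j))`. -/
def latBdry (m : ℕ) (f : (Fin m → ℤ) × Fin m → ℝ) (v : Fin m → ℤ) : ℝ :=
  ∑ j : Fin m, (f (v - latGen m j, j) - f (v, j))

/-- The shift `τ_u f` of a 1-cochain by `u ∈ ℤᵐ`. -/
def latShift (m : ℕ) (u : Fin m → ℤ) (f : (Fin m → ℤ) × Fin m → ℝ) :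
    (Fin m → ℤ) × Fin m → ℝ :=
  fun e => f (e.1 - u, e.2)


section Helpers
open Finset








lemma sum_support_congr {X : Type*} [DecidableEq X] (h : X → ℝ) {s t : Finset X}
    (hs : ∀ x, h x ≠ 0 → x ∈ s) (ht : ∀ x, h x ≠ 0 → x ∈ t) :
    ∑ x ∈ s, h x = ∑ x ∈ t, h x := by
  have h1 : ∑ x ∈ s ∩ t, h x = ∑ x ∈ s, h x :=
    Finset.sum_subset Finset.inter_subset_left (fun x hx hnx => by
      by_contra hne; exact hnx (Finset.mem_inter.2 ⟨hx, ht x hne⟩))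
  have h2 : ∑ x ∈ s ∩ t, h x = ∑ x ∈ t, h x :=
    Finset.sum_subset Finset.inter_subset_right (fun x hx hnx => by
      by_contra hne; exact hnx (Finset.mem_inter.2 ⟨hs x hne, hx⟩))
  rw [← h1, h2]

lemma sum_shift {m : ℕ} (F : (Fin m → ℤ) → ℝ) (s : Finset (Fin m → ℤ)) (e : Fin m → ℤ) :
    ∑ v ∈ s, F (v - e) = ∑ w ∈ s.image (· - e), F w :=
  (Finset.sum_image (fun a _ b _ h => by simpa using congrArg (· + e) h)).symm

lemma total_sum_zero (m : ℕ) (f : (Fin m → ℤ) × Fin m → ℝ)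
    (hclosed : ∀ v, latBdry m f v = 0) (R : ℕ)
    (hsupp : ∀ p : (Fin m → ℤ) × Fin m, f p ≠ 0 → ∀ i, -(R:ℤ) ≤ p.1 i ∧ p.1 i < R)
    (j : Fin m) :
    ∑ w ∈ Fintype.piFinset (fun _ : Fin m => Finset.Ico (-(R:ℤ) - 1) ((R:ℤ) + 1)), f (w, j) = 0 := by
  classical
  set U : Finset (Fin m → ℤ) :=
    Fintype.piFinset (fun _ : Fin m => Finset.Ico (-(R:ℤ) - 1) ((R:ℤ) + 1)) with hUdef
  have hUmem : ∀ w : Fin m → ℤ, (∀ i, -(R:ℤ) - 1 ≤ w i ∧ w i < (R:ℤ) + 1) → w ∈ U := by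
    intro w hw
    rw [hUdef, Fintype.mem_piFinset]
    intro i
    exact Finset.mem_Ico.2 (hw i)
  have key : (0:ℝ) = ∑ v ∈ U, (v j : ℝ) * latBdry m f v :=
    (Finset.sum_eq_zero (fun v _ => by rw [hclosed v, mul_zero])).symm
  have expand : ∑ v ∈ U, (v j : ℝ) * latBdry m f v
      = ∑ k : Fin m, (∑ v ∈ U, (v j : ℝ) * f (v - latGen m k, k)
          - ∑ v ∈ U, (v j : ℝ) * f (v, k)) := by
    simp only [latBdry, Finset.mul_sum, mul_sub]
    rw [Finset.sum_comm]
    exact Finset.sum_congr rfl fun k _ => by rw [Finset.sum_sub_distrib]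
  have hterm : ∀ k : Fin m,
      ∑ v ∈ U, (v j : ℝ) * f (v - latGen m k, k)
        = ∑ w ∈ U, (((w + latGen m k) j : ℤ) : ℝ) * f (w, k) := by
    intro k
    have h1 : ∑ v ∈ U, (v j : ℝ) * f (v - latGen m k, k)
        = ∑ w ∈ U.image (· - latGen m k), (((w + latGen m k) j : ℤ) : ℝ) * f (w, k) := by
      rw [← sum_shift (fun w => (((w + latGen m k) j : ℤ) : ℝ) * f (w, k)) U (latGen m k)]
      refine Finset.sum_congr rfl fun v _ => ?_
      simp only [sub_add_cancel]
    rw [h1]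
    refine sum_support_congr _ (fun w hw => ?_) (fun w hw => ?_)
    · have hf : f (w, k) ≠ 0 := fun h => hw (by rw [h, mul_zero])
      have hb := hsupp (w, k) hf
      rw [Finset.mem_image]
      refine ⟨w + latGen m k, hUmem _ fun i => ?_, by ring⟩
      have hbi : -(R:ℤ) ≤ w i ∧ w i < R := hb i
      have : (latGen m k) i = if i = k then 1 else 0 := by
        simp [latGen, Pi.single_apply]
      simp only [Pi.add_apply, this]
      split <;> omega
    · have hf : f (w, k) ≠ 0 := fun h => hw (by rw [h, mul_zero])
      have hb := hsupp (w, k) hf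
      exact hUmem _ fun i => by
        have hbi : -(R:ℤ) ≤ w i ∧ w i < R := hb i
        omega
  have hdiff : ∀ k : Fin m,
      ∑ w ∈ U, (((w + latGen m k) j : ℤ) : ℝ) * f (w, k) - ∑ w ∈ U, (w j : ℝ) * f (w, k)
        = if j = k then ∑ w ∈ U, f (w, k) else 0 := by
    intro k
    rw [← Finset.sum_sub_distrib]
    have : ∀ w ∈ U, (((w + latGen m k) j : ℤ) : ℝ) * f (w, k) - (w j : ℝ) * f (w, k)
        = (if j = k then (1:ℝ) else 0) * f (w, k) := by
      intro w _
      have : ((w + latGen m k) j : ℤ) = w j + if j = k then 1 else 0 := by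
        simp [latGen, Pi.single_apply]
      rw [this]
      split <;> push_cast <;> ring
    rw [Finset.sum_congr rfl this]
    split
    · simp
    · simp
  have final2 : ∀ k : Fin m,
      ∑ v ∈ U, (v j : ℝ) * f (v - latGen m k, k) - ∑ v ∈ U, (v j : ℝ) * f (v, k)
        = if j = k then ∑ w ∈ U, f (w, k) else 0 := by
    intro k
    rw [hterm k]
    exact hdiff k
  have final : (0:ℝ) = ∑ k : Fin m, if j = k then ∑ w ∈ U, f (w, k) else 0 :=
    key.trans (expand.trans (Finset.sum_congr rfl fun k _ => final2 k))
  rw [Finset.sum_ite_eq] at final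
  simpa using final.symm

lemma pow_diff_bound (x c : ℝ) (hx : 0 ≤ x) (hc : 0 ≤ c) (m : ℕ) :
    (x + c)^m - x^m ≤ m * c * (x + c)^(m-1) := by
  have h := geom_sum₂_mul (x + c) x m
  have hsum : ∑ i ∈ Finset.range m, (x + c)^i * x^(m-1-i) ≤ m * (x + c)^(m-1) := by
    calc ∑ i ∈ Finset.range m, (x+c)^i * x^(m-1-i)
        ≤ ∑ _i ∈ Finset.range m, (x+c)^(m-1) := by
          refine Finset.sum_le_sum fun i hi => ?_
          have hi' : i < m := Finset.mem_range.1 hi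
          have h1 : x^(m-1-i) ≤ (x+c)^(m-1-i) := pow_le_pow_left₀ hx (by linarith) _
          have h2 : (x+c)^i * x^(m-1-i) ≤ (x+c)^i * (x+c)^(m-1-i) :=
            mul_le_mul_of_nonneg_left h1 (pow_nonneg (by linarith) _)
          have h3 : (x+c)^i * (x+c)^(m-1-i) = (x+c)^(m-1) := by
            rw [← pow_add]
            congr 1
            omega
          linarith
      _ = m * (x+c)^(m-1) := by rw [Finset.sum_const, Finset.card_range, nsmul_eq_mul]
  have hxc : (x+c) - x = c := by ring
  rw [hxc] at h
  calc (x+c)^m - x^m = (∑ i ∈ Finset.range m, (x + c)^i * x^(m-1-i)) * c := h.symm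
    _ ≤ (m * (x+c)^(m-1)) * c := mul_le_mul_of_nonneg_right hsum hc
    _ = m * c * (x+c)^(m-1) := by ring

end Helpers

/-- For a finitely supported closed 1-cochain `f` on the standard
Cayley graph of `ℤᵐ`, the family of shifts `{τ_u f}` is not a Riesz system in `ℓ²(E)`:
the lower Riesz bound fails for every `δ > 0`. -/
theorem coexact_stmt_12 (m : ℕ) (hm : 1 ≤ m) (f : (Fin m → ℤ) × Fin m → ℝ)
    (hfin : (Function.support f).Finite) (hclosed : ∀ v, latBdry m f v = 0) :
    ∀ δ : ℝ, 0 < δ → ∃ a : (Fin m → ℤ) → ℝ, (Function.support a).Finite ∧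
      0 < ∑ᶠ u, a u ^ 2 ∧
      ∑' e : (Fin m → ℤ) × Fin m, (∑ᶠ u, a u * latShift m u f e) ^ 2 <
        δ * ∑ᶠ u, a u ^ 2 := by

  classical
  intro δ hδ
  set T : Finset ((Fin m → ℤ) × Fin m) := hfin.toFinset with hT
  set R : ℕ := 1 + T.sup (fun p => Finset.univ.sup fun i => (p.1 i).natAbs) with hR
  have hsupp : ∀ p : (Fin m → ℤ) × Fin m, f p ≠ 0 → ∀ i, -(R:ℤ) ≤ p.1 i ∧ p.1 i < R := by
    intro p hp i
    have hpT : p ∈ T := hfin.mem_toFinset.2 hp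
    have h1 : (p.1 i).natAbs ≤ T.sup (fun p => Finset.univ.sup fun i => (p.1 i).natAbs) :=
      le_trans (Finset.le_sup (f := fun i => (p.1 i).natAbs) (Finset.mem_univ i))
        (Finset.le_sup (f := fun p => Finset.univ.sup fun i => (p.1 i).natAbs) hpT)
    omega
  set M : ℝ := ∑ p ∈ T, |f p| with hM
  have hM0 : 0 ≤ M := Finset.sum_nonneg fun p _ => abs_nonneg _
  set C : ℝ := (m:ℝ) * (m:ℝ) * (4*R) * 2^(m-1) * M^2 with hC
  have hC0 : 0 ≤ C := by positivity
  set N : ℕ := max (2*R+1) (⌈C/δ⌉₊ + 1) with hN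
  have hN2R : 2*R < N := lt_of_lt_of_le (Nat.lt_succ_self _) (le_max_left _ _)
  have hN1 : 1 ≤ N := by omega
  have hNC : C < δ * N := by
    have h1 : C/δ ≤ (⌈C/δ⌉₊ : ℝ) := Nat.le_ceil _
    have h2 : (⌈C/δ⌉₊ : ℝ) < (N : ℝ) := by
      exact_mod_cast Nat.lt_of_lt_of_le (Nat.lt_succ_self _) (le_max_right _ _)
    have h3 := lt_of_le_of_lt h1 h2
    rw [div_lt_iff₀ hδ] at h3
    linarith
  set B : Finset (Fin m → ℤ) := Fintype.piFinset fun _ : Fin m => Finset.Ico (0:ℤ) (N:ℤ) with hB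
  have hBcard : B.card = N ^ m := by
    rw [hB, Fintype.card_piFinset]
    simp
  set a : (Fin m → ℤ) → ℝ := fun u => if u ∈ B then 1 else 0 with ha
  have hasupp : Function.support a ⊆ ↑B := by
    intro u hu
    by_contra h
    exact hu (if_neg h)
  have hsq : ∑ᶠ u, a u ^ 2 = (N:ℝ)^m := by
    have hs2 : Function.support (fun u => a u ^ 2) ⊆ ↑B := by
      intro u hu
      apply hasupp
      simp only [Function.mem_support] at hu ⊢
      exact fun h => hu (by rw [h]; ring)
    rw [finsum_eq_finset_sum_of_support_subset _ hs2]
    have hone : ∀ u ∈ B, a u ^ 2 = 1 := fun u hu => by rw [ha]; simp [hu]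
    rw [Finset.sum_congr rfl hone, Finset.sum_const, hBcard]
    simp
  have hNR0 : (0:ℝ) < (N:ℝ) := by exact_mod_cast Nat.lt_of_lt_of_le Nat.zero_lt_one hN1
  refine ⟨a, Set.Finite.subset B.finite_toSet hasupp, by rw [hsq]; positivity, ?_⟩
  set g : (Fin m → ℤ) × Fin m → ℝ := fun e => ∑ u ∈ B, f (e.1 - u, e.2) with hg
  have hga : ∀ e, (∑ᶠ u, a u * latShift m u f e) = g e := by
    intro e
    have hs2 : Function.support (fun u => a u * latShift m u f e) ⊆ ↑B := by
      intro u hu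
      apply hasupp
      simp only [Function.mem_support] at hu ⊢
      exact fun h => hu (by rw [h, zero_mul])
    rw [finsum_eq_finset_sum_of_support_subset _ hs2, hg]
    refine Finset.sum_congr rfl fun u hu => ?_
    rw [ha]
    simp [hu, latShift]
  have hUz := fun j => total_sum_zero m f hclosed R hsupp j
  have hvan : ∀ (s : Finset (Fin m → ℤ)) (j : Fin m),
      (∀ w, f (w, j) ≠ 0 → w ∈ s) → ∑ w ∈ s, f (w, j) = 0 := by
    intro s j hs
    rw [sum_support_congr (fun w => f (w, j)) hs (fun w hw => ?_)]
    · exact hUz j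
    · rw [Fintype.mem_piFinset]
      intro i
      have hb : -(R:ℤ) ≤ w i ∧ w i < R := hsupp (w, j) hw i
      rw [Finset.mem_Ico]
      omega
  have hinj : ∀ v : Fin m → ℤ, ∀ x ∈ B, ∀ y ∈ B, v - x = v - y → x = y := by
    intro v x _ y _ h
    simpa using congrArg (fun z => v - z) h
  have hgs : ∀ v (j : Fin m), g (v, j) = ∑ w ∈ B.image (fun u => v - u), f (w, j) := by
    intro v j
    have : g (v, j) = ∑ u ∈ B, f (v - u, j) := by rw [hg]
    rw [this]
    exact (Finset.sum_image (f := fun w => f (w, j)) (g := fun u => v - u) (hinj v)).symm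
  have hinner : ∀ v (j : Fin m), (∀ i, (R:ℤ) ≤ v i ∧ v i < (N:ℤ) - R) → g (v, j) = 0 := by
    intro v j hv
    rw [hgs v j]
    apply hvan
    intro w hw
    have hb : ∀ i, -(R:ℤ) ≤ w i ∧ w i < R := fun i => hsupp (w, j) hw i
    rw [Finset.mem_image]
    refine ⟨v - w, ?_, by simp⟩
    rw [hB, Fintype.mem_piFinset]
    intro i
    rw [Finset.mem_Ico]
    have h1 := hb i
    have h2 := hv i
    have h3 : (v - w) i = v i - w i := rfl
    omega
  have houter : ∀ v (j : Fin m), g (v, j) ≠ 0 → ∀ i, -(R:ℤ) ≤ v i ∧ v i < (N:ℤ) + R := by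
    intro v j hgv i
    have hex : ∃ u ∈ B, f (v - u, j) ≠ 0 := by
      by_contra h
      push_neg at h
      exact hgv (Finset.sum_eq_zero h)
    obtain ⟨u, huB, hfu⟩ := hex
    have h1 : -(R:ℤ) ≤ v i - u i ∧ v i - u i < R := hsupp (v - u, j) hfu i
    rw [hB, Fintype.mem_piFinset] at huB
    have h2 := Finset.mem_Ico.1 (huB i)
    omega
  set Do : Finset (Fin m → ℤ) :=
    Fintype.piFinset fun _ : Fin m => Finset.Ico (-(R:ℤ)) ((N:ℤ) + R) with hDo
  set Di : Finset (Fin m → ℤ) :=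
    Fintype.piFinset fun _ : Fin m => Finset.Ico ((R:ℤ)) ((N:ℤ) - R) with hDi
  set S : Finset ((Fin m → ℤ) × Fin m) := (Do \ Di) ×ˢ Finset.univ with hS
  have hgS : ∀ e : (Fin m → ℤ) × Fin m, e ∉ S → g e ^ 2 = 0 := by
    rintro ⟨v, j⟩ he
    rcases eq_or_ne (g (v, j)) 0 with h | h
    · rw [h]; ring
    exfalso
    apply he
    rw [hS, Finset.mem_product]
    refine ⟨?_, Finset.mem_univ _⟩
    rw [Finset.mem_sdiff]
    constructor
    · rw [hDo, Fintype.mem_piFinset]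
      intro i
      rw [Finset.mem_Ico]
      exact houter v j h i
    · intro hvDi
      apply h
      apply hinner v j
      intro i
      rw [hDi, Fintype.mem_piFinset] at hvDi
      exact Finset.mem_Ico.1 (hvDi i)
  have hgb : ∀ v (j : Fin m), |g (v, j)| ≤ M := by
    intro v j
    have h0 : |g (v, j)| ≤ ∑ u ∈ B, |f (v - u, j)| := by
      rw [hg]
      exact Finset.abs_sum_le_sum_abs _ _
    have h1 : ∑ u ∈ B, |f (v - u, j)| = ∑ w ∈ B.image (fun u => v - u), |f (w, j)| :=
      (Finset.sum_image (f := fun w => |f (w, j)|) (g := fun u => v - u) (hinj v)).symm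
    have h2 : ∑ w ∈ B.image (fun u => v - u), |f (w, j)|
        = ∑ p ∈ (B.image (fun u => v - u)).image (fun w => (w, j)), |f p| :=
      (Finset.sum_image (f := fun p => |f p|) (g := fun w => (w, j))
        (fun x _ y _ h => congrArg Prod.fst h)).symm
    have h3 : ∑ p ∈ (B.image (fun u => v - u)).image (fun w => (w, j)), |f p|
        ≤ ∑ p ∈ (B.image (fun u => v - u)).image (fun w => (w, j)) ∪ T, |f p| :=
      Finset.sum_le_sum_of_subset_of_nonneg Finset.subset_union_left
        (fun p _ _ => abs_nonneg _)
    have h4 : ∑ p ∈ (B.image (fun u => v - u)).image (fun w => (w, j)) ∪ T, |f p|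
        = ∑ p ∈ T, |f p| := by
      refine (Finset.sum_subset Finset.subset_union_right (fun p _ hpT => ?_)).symm
      have hfp : f p = 0 := by
        by_contra hc
        exact hpT (hfin.mem_toFinset.2 hc)
      rw [hfp, abs_zero]
    rw [hM]
    linarith
  have htsum : ∑' e : (Fin m → ℤ) × Fin m, (∑ᶠ u, a u * latShift m u f e) ^ 2
      = ∑ e ∈ S, g e ^ 2 := by
    rw [tsum_congr (fun e => by rw [hga e])]
    exact tsum_eq_sum hgS
  have hsum_le : ∑ e ∈ S, g e ^ 2 ≤ (S.card : ℝ) * M ^ 2 := by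
    have h := Finset.sum_le_card_nsmul S (fun e => g e ^ 2) (M ^ 2) (fun e _ => by
      have hb := hgb e.1 e.2
      calc g e ^ 2 = |g e| ^ 2 := (sq_abs _).symm
        _ ≤ M ^ 2 := by
          have : |g e| ≤ M := by simpa using hb
          exact pow_le_pow_left₀ (abs_nonneg _) this 2)
    simpa [nsmul_eq_mul] using h
  have hDiDo : Di ⊆ Do := by
    rw [hDi, hDo]
    refine Fintype.piFinset_subset _ _ fun i => ?_
    intro x hx
    rw [Finset.mem_Ico] at hx ⊢
    omega
  have hDocard : Do.card = (N + 2*R) ^ m := by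
    rw [hDo, Fintype.card_piFinset]
    have hc : ((Finset.Ico (-(R:ℤ)) ((N:ℤ) + R)).card) = N + 2*R := by
      rw [Int.card_Ico]
      omega
    simp [hc]
  have hDicard : Di.card = (N - 2*R) ^ m := by
    rw [hDi, Fintype.card_piFinset]
    have hc : ((Finset.Ico ((R:ℤ)) ((N:ℤ) - R)).card) = N - 2*R := by
      rw [Int.card_Ico]
      omega
    simp [hc]
  have hScard : (S.card : ℝ) ≤ (m:ℝ) * (((N:ℝ) + 2*R)^m - ((N:ℝ) - 2*R)^m) := by
    have hle : (N - 2*R)^m ≤ (N + 2*R)^m := Nat.pow_le_pow_left (by omega) m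
    rw [hS, Finset.card_product, Finset.card_univ, Fintype.card_fin,
      Finset.card_sdiff_of_subset hDiDo, hDocard, hDicard]
    rw [Nat.cast_mul, Nat.cast_sub hle, Nat.cast_pow, Nat.cast_pow,
      Nat.cast_sub (show 2*R ≤ N by omega)]
    push_cast
    ring_nf
    exact le_rfl
  have hpoly : ((N:ℝ) + 2*R)^m - ((N:ℝ) - 2*R)^m ≤ (m:ℝ) * (4*R) * (2*(N:ℝ))^(m-1) := by
    have h2RN : (2*R:ℝ) ≤ (N:ℝ) := by exact_mod_cast le_of_lt hN2R
    have hx : (0:ℝ) ≤ (N:ℝ) - 2*R := by linarith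
    have h := pow_diff_bound ((N:ℝ) - 2*R) (4*(R:ℝ)) hx (by positivity) m
    have he : (N:ℝ) - 2*R + 4*(R:ℝ) = (N:ℝ) + 2*R := by ring
    rw [he] at h
    have h2 : ((N:ℝ) + 2*R)^(m-1) ≤ (2*(N:ℝ))^(m-1) :=
      pow_le_pow_left₀ (by positivity) (by linarith) _
    calc ((N:ℝ) + 2*R)^m - ((N:ℝ) - 2*R)^m ≤ (m:ℝ) * (4*(R:ℝ)) * ((N:ℝ)+2*R)^(m-1) := h
      _ ≤ (m:ℝ) * (4*R) * (2*(N:ℝ))^(m-1) :=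
          mul_le_mul_of_nonneg_left h2 (by positivity)
  have hNm : (N:ℝ)^m = (N:ℝ) * (N:ℝ)^(m-1) := by
    rw [← pow_succ']
    congr 1
    omega
  rw [htsum, hsq]
  calc ∑ e ∈ S, g e ^ 2 ≤ (S.card:ℝ) * M^2 := hsum_le
    _ ≤ ((m:ℝ) * (((N:ℝ)+2*R)^m - ((N:ℝ)-2*R)^m)) * M^2 :=
        mul_le_mul_of_nonneg_right hScard (by positivity)
    _ ≤ ((m:ℝ) * ((m:ℝ) * (4*R) * (2*(N:ℝ))^(m-1))) * M^2 :=
        mul_le_mul_of_nonneg_right (mul_le_mul_of_nonneg_left hpoly (by positivity))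
          (by positivity)
    _ = C * (N:ℝ)^(m-1) := by rw [hC, mul_pow]; ring
    _ < (δ * (N:ℝ)) * (N:ℝ)^(m-1) := mul_lt_mul_of_pos_right hNC (pow_pos hNR0 _)
    _ = δ * (N:ℝ)^m := by rw [hNm]; ring
end
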